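/- arXiv:1411.4063 — 9 statements merged into one kernel-verified Lean document; each statement's English description precedes it below -/
import Mathlib

section
/- Let P = ℂ[z_{αi}, w_i : 1 ≤ α ≤ n, 1 ≤ i ≤ k] with k ≥ n, and define q_α = Σ_{i=1}^k z_{αi} w_i for 1 ≤ α ≤ n. Then q₁,…,q_n is a regular sequence in P. -/
open MvPolynomial
open Finset

section KZ
variable {R : Type*} [CommRing R]

def pidl (r : ℕ → R) (j : ℕ) : Ideal R := Ideal.span (Set.range fun i : Fin j => r i)

lemma r_mem_pidl {r : ℕ → R} {i j : ℕ} (h : i < j) : r i ∈ pidl r j :=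
  Ideal.subset_span ⟨⟨i, h⟩, rfl⟩

lemma mem_pidl_iff {r : ℕ → R} {j : ℕ} {x : R} :
    x ∈ pidl r j ↔ ∃ g : Fin j → R, ∑ i, g i * r i = x := by
  rw [pidl, ← Ideal.submodule_span_eq, Submodule.mem_span_range_iff_exists_fun]
  simp [smul_eq_mul]

lemma mem_pidl_iff' {r : ℕ → R} {j : ℕ} {x : R} :
    x ∈ pidl r j ↔ ∃ g : ℕ → R, ∑ i ∈ range j, g i * r i = x := by
  rw [mem_pidl_iff]
  constructor
  · rintro ⟨g, rfl⟩
    refine ⟨fun i => if h : i < j then g ⟨i, h⟩ else 0, ?_⟩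
    rw [← Fin.sum_univ_eq_sum_range (fun i => (if h : i < j then g ⟨i, h⟩ else 0) * r i) j]
    exact Finset.sum_congr rfl fun i _ => by rw [dif_pos i.isLt]
  · rintro ⟨g, rfl⟩
    exact ⟨fun i => g i, (Fin.sum_univ_eq_sum_range (fun i => g i * r i) j)⟩
end KZ

section KZ2
variable {R : Type*} [CommRing R]

lemma koszul_syzygy (m : ℕ) (r : ℕ → R) :
    ∀ g : ℕ → R, (∀ j < m, ∀ f, f * r j ∈ pidl r j → f ∈ pidl r j) →
    ∑ i ∈ Finset.range m, g i * r i = 0 →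
    ∃ c : ℕ → ℕ → R, (∀ i, c i i = 0) ∧ (∀ i j, c i j = - c j i) ∧
      ∀ i < m, g i = ∑ j ∈ Finset.range m, c i j * r j := by
  induction m with
  | zero => exact fun g _ _ => ⟨0, by simp, by simp, by omega⟩
  | succ m ih =>
    intro g hreg hsyz
    rw [Finset.sum_range_succ] at hsyz
    have h1 : g m * r m ∈ pidl r m := by
      have he : g m * r m = ∑ i ∈ Finset.range m, (-(g i)) * r i := by
        rw [Finset.sum_congr rfl (fun i _ => by rw [neg_mul] : ∀ i ∈ Finset.range m,
          (-(g i)) * r i = -(g i * r i)), Finset.sum_neg_distrib]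
        linear_combination hsyz
      rw [he]
      exact Ideal.sum_mem _ fun i hi =>
        Ideal.mul_mem_left _ _ (r_mem_pidl (Finset.mem_range.mp hi))
    obtain ⟨d, hd⟩ := mem_pidl_iff'.mp (hreg m (Nat.lt_succ_self m) _ h1)
    have hsyz' : ∑ i ∈ Finset.range m, (g i + d i * r m) * r i = 0 := by
      have h2 : ∑ i ∈ Finset.range m, (g i + d i * r m) * r i
          = (∑ i ∈ Finset.range m, g i * r i) + (∑ i ∈ Finset.range m, d i * r i) * r m := by
        rw [Finset.sum_mul, ← Finset.sum_add_distrib]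
        exact Finset.sum_congr rfl fun i _ => by ring
      rw [h2, hd]; linear_combination hsyz
    obtain ⟨c, hcd, hca, hcg⟩ := ih (fun i => g i + d i * r m)
      (fun j hj => hreg j (hj.trans (Nat.lt_succ_self m))) hsyz'
    refine ⟨fun i j => if i = m then (if j < m then d j else 0) else
      (if j = m then (if i < m then -d i else 0) else c i j), ?_, ?_, ?_⟩
    · intro i
      by_cases h : i = m
      · simp [h]
      · simp [h, hcd i]
    · intro i j
      by_cases hi : i = m <;> by_cases hj : j = m <;>
        simp only [hi, hj, if_true, if_false, lt_self_iff_false]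
      · simp
      · by_cases hjm : j < m <;> simp [hjm]
      · by_cases him : i < m <;> simp [him]
      · exact hca i j
    · intro i hi
      rw [Finset.sum_range_succ]
      rcases Nat.lt_succ_iff_lt_or_eq.mp hi with hi' | heq
      · have hne : i ≠ m := Nat.ne_of_lt hi'
        have hrow : ∀ j ∈ Finset.range m,
            (if i = m then (if j < m then d j else 0) else
              (if j = m then (if i < m then -d i else 0) else c i j)) * r j
              = c i j * r j := by
          intro j hj
          have : j ≠ m := Nat.ne_of_lt (Finset.mem_range.mp hj)
          simp [hne, this]
        rw [Finset.sum_congr rfl hrow]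
        simp only [hne, if_false, if_true, hi', lt_self_iff_false, if_pos rfl]
        rw [← hcg i hi']; ring
      · subst heq
        have hrow : ∀ j ∈ Finset.range i,
            (if i = i then (if j < i then d j else 0) else
              (if j = i then (if i < i then -d i else 0) else c i j)) * r j
              = d j * r j := by
          intro j hj
          simp [Finset.mem_range.mp hj]
        rw [Finset.sum_congr rfl hrow]
        simp [hd]
end KZ2

section Anti
variable {R : Type*} [CommRing R]

lemma antisym_double_sum (a : ℕ) (c : ℕ → ℕ → R) (v : ℕ → R)
    (hcd : ∀ i, c i i = 0) (hca : ∀ i j, c i j = - c j i) :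
    ∑ i ∈ Finset.range a, ∑ j ∈ Finset.range a, c i j * v j * v i = 0 := by
  rw [← Finset.sum_product']
  refine Finset.sum_involution (fun p _ => (p.2, p.1)) ?_ ?_ ?_ ?_
  · rintro ⟨i, j⟩ _
    have := hca i j
    simp only
    linear_combination (v i * v j) * hca i j
  · rintro ⟨i, j⟩ _ hne h
    apply hne
    injection h with h1 h2
    simp only at h1 h2 ⊢
    subst h1
    simp [hcd]
  · rintro ⟨i, j⟩ hp
    simp only [Finset.mem_product] at hp ⊢
    exact ⟨hp.2, hp.1⟩
  · rintro ⟨i, j⟩ _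
    rfl
end Anti

section StepB
variable {R : Type*} [CommRing R]
open Polynomial

lemma coeff_mul_lin (w r : R) (f : R[X]) (e : ℕ) :
    (f * (Polynomial.X * Polynomial.C w + Polynomial.C r)).coeff (e + 1) = f.coeff e * w + f.coeff (e + 1) * r := by
  rw [mul_add, Polynomial.coeff_add, ← mul_assoc, Polynomial.coeff_mul_C,
    Polynomial.coeff_mul_X, Polynomial.coeff_mul_C]

lemma stepB_abstract (I : Ideal R) (w r : R)
    (hw : ∀ b : R, b * w ∈ I → b ∈ I) :
    ∀ f : R[X], f * (Polynomial.X * Polynomial.C w + Polynomial.C r) ∈ Ideal.map (Polynomial.C : R →+* R[X]) I →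
      f ∈ Ideal.map (Polynomial.C : R →+* R[X]) I := by
  suffices H : ∀ N : ℕ, ∀ f : R[X], f.natDegree ≤ N →
      f * (Polynomial.X * Polynomial.C w + Polynomial.C r) ∈ Ideal.map (Polynomial.C : R →+* R[X]) I →
      f ∈ Ideal.map (Polynomial.C : R →+* R[X]) I by
    intro f hf; exact H f.natDegree f le_rfl hf
  intro N
  induction N with
  | zero =>
    intro f hdeg hf
    have hf0 : f = Polynomial.C (f.coeff 0) := Polynomial.eq_C_of_natDegree_le_zero hdeg
    have h1 := Ideal.mem_map_C_iff.mp hf 1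
    rw [coeff_mul_lin] at h1
    have hc0 : f.coeff 1 = 0 := by
      rw [hf0]; simp
    rw [hc0, zero_mul, add_zero] at h1
    rw [hf0]
    exact Ideal.mem_map_of_mem _ (hw _ h1)
  | succ N ihN =>
    intro f hdeg hf
    have htop := Ideal.mem_map_C_iff.mp hf (N + 2)
    rw [coeff_mul_lin] at htop
    have hc2 : f.coeff (N + 2) = 0 :=
      Polynomial.coeff_eq_zero_of_natDegree_lt (lt_of_le_of_lt hdeg (by omega))
    rw [hc2, zero_mul, add_zero] at htop
    have htopI : f.coeff (N + 1) ∈ I := hw _ htop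
    set g : R[X] := f - Polynomial.C (f.coeff (N + 1)) * Polynomial.X ^ (N + 1) with hg
    have hgd : g.natDegree ≤ N := by
      refine Polynomial.natDegree_le_iff_coeff_eq_zero.mpr fun e he => ?_
      rw [hg]
      rcases Nat.lt_or_ge e (N + 2) with h | h
      · have : e = N + 1 := by omega
        subst this
        simp
      · have h1 : f.coeff e = 0 :=
          Polynomial.coeff_eq_zero_of_natDegree_lt (lt_of_le_of_lt hdeg (by omega))
        have h2 : (Polynomial.C (f.coeff (N + 1)) * Polynomial.X ^ (N + 1)).coeff e = 0 := by
          rw [Polynomial.coeff_C_mul, Polynomial.coeff_X_pow, if_neg (by omega)]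
          ring
        simp [Polynomial.coeff_sub, h1, h2]
    have hCtop : (Polynomial.C (f.coeff (N + 1)) * Polynomial.X ^ (N + 1) : R[X]) ∈ Ideal.map (Polynomial.C : R →+* R[X]) I :=
      Ideal.mul_mem_right _ _ (Ideal.mem_map_of_mem _ htopI)
    have hgmem : g * (Polynomial.X * Polynomial.C w + Polynomial.C r) ∈ Ideal.map (Polynomial.C : R →+* R[X]) I := by
      rw [hg, sub_mul]
      exact Ideal.sub_mem _ hf (Ideal.mul_mem_right _ _ hCtop)
    have := ihN g hgd hgmem
    have hfg : f = g + Polynomial.C (f.coeff (N + 1)) * Polynomial.X ^ (N + 1) := by rw [hg]; ring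
    rw [hfg]
    exact Ideal.add_mem _ this hCtop
end StepB

section Main
open Finset

variable {n k : ℕ}

abbrev SS (n k : ℕ) := MvPolynomial ((Fin n × Fin k) ⊕ Fin k) ℂ

noncomputable def Qp (n k : ℕ) (ι : ℕ → Fin k) (m : ℕ) (α : Fin n) : SS n k :=
  ∑ t ∈ range m, X (Sum.inl (α, ι t)) * X (Sum.inr (ι t))

noncomputable def rsq (n k : ℕ) (ι : ℕ → Fin k) (m : ℕ) : ℕ → SS n k :=
  fun a => if h : a < n then Qp n k ι m ⟨a, h⟩ else 0

lemma rsq_eq {ι : ℕ → Fin k} {m a : ℕ} (h : a < n) :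
    rsq n k ι m a = Qp n k ι m ⟨a, h⟩ := dif_pos h

lemma sub_aeval_mem {σ : Type*} [DecidableEq σ] (v₀ : σ) (f : MvPolynomial σ ℂ) :
    f - aeval (fun v => if v = v₀ then (0 : MvPolynomial σ ℂ) else X v) f
      ∈ Ideal.span {(X v₀ : MvPolynomial σ ℂ)} := by
  set J : Ideal (MvPolynomial σ ℂ) := Ideal.span {(X v₀ : MvPolynomial σ ℂ)} with hJ
  have hcomp : (Ideal.Quotient.mkₐ ℂ J).comp
      (aeval fun v => if v = v₀ then (0 : MvPolynomial σ ℂ) else X v)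
      = Ideal.Quotient.mkₐ ℂ J := by
    apply MvPolynomial.algHom_ext
    intro v
    by_cases h : v = v₀
    · subst h
      have h0 : (aeval (R := ℂ) fun w => if w = v then (0 : MvPolynomial σ ℂ) else X w)
          (X v) = 0 := by
        rw [aeval_X, if_pos rfl]
      rw [AlgHom.comp_apply, h0, map_zero, eq_comm, Ideal.Quotient.mkₐ_eq_mk,
        Ideal.Quotient.eq_zero_iff_mem]
      exact Ideal.subset_span rfl
    · simp [h]
  have h2 : Ideal.Quotient.mk J (aeval (fun v => if v = v₀ then (0 : MvPolynomial σ ℂ)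
      else X v) f) = Ideal.Quotient.mk J f := by
    have := DFunLike.congr_fun hcomp f
    simpa using this
  exact Ideal.Quotient.eq.mp h2.symm

set_option maxHeartbeats 1000000 in
lemma stepA (ι : ℕ → Fin k) (m : ℕ)
    (hinj : ∀ s ≤ m, ∀ t ≤ m, ι s = ι t → s = t)
    (a : ℕ) (ham : a ≤ m) (han : a < n)
    (IH : ∀ j, j < m → j < n →
      ∀ f, f * rsq n k ι m j ∈ pidl (rsq n k ι m) j → f ∈ pidl (rsq n k ι m) j)
    (f : SS n k) (hf : f * X (Sum.inr (ι m)) ∈ pidl (rsq n k ι (m + 1)) a) :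
    f ∈ pidl (rsq n k ι (m + 1)) a := by
  classical
  set v₀ : (Fin n × Fin k) ⊕ Fin k := Sum.inr (ι m) with hv₀
  set φ : SS n k →ₐ[ℂ] SS n k := aeval (fun v => if v = v₀ then 0 else X v) with hφ
  have hφZ : ∀ (α : Fin n) (i : Fin k), φ (X (Sum.inl (α, i))) = X (Sum.inl (α, i)) := by
    intro α i; rw [hφ, aeval_X, if_neg (by simp [hv₀])]
  have hφW : ∀ t < m, φ (X (Sum.inr (ι t))) = X (Sum.inr (ι t)) := by
    intro t ht
    rw [hφ, aeval_X, if_neg]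
    simp only [hv₀, Sum.inr.injEq]
    intro h
    exact absurd (hinj t (le_of_lt ht) m le_rfl h) (Nat.ne_of_lt ht)
  have hφWm : φ (X (Sum.inr (ι m))) = 0 := by rw [hφ, aeval_X, if_pos rfl]
  have hφQ : ∀ (α : Fin n), φ (Qp n k ι (m + 1) α) = Qp n k ι m α := by
    intro α
    rw [Qp, Qp, map_sum, sum_range_succ, map_mul, hφZ, hφWm, mul_zero, add_zero]
    exact Finset.sum_congr rfl fun t ht => by
      rw [map_mul, hφZ, hφW t (mem_range.mp ht)]
  have hφrs : ∀ j < n, φ (rsq n k ι (m + 1) j) = rsq n k ι m j := by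
    intro j hj
    rw [rsq_eq hj, rsq_eq hj, hφQ]
  obtain ⟨g, hg⟩ := mem_pidl_iff.mp hf
  set v : ℕ → SS n k := rsq n k ι (m + 1) with hv
  -- apply φ to the equation
  have hphi : ∑ i : Fin a, φ (g i) * rsq n k ι m i = 0 := by
    have := congrArg φ hg
    rw [map_sum, map_mul, hφWm, mul_zero] at this
    rw [← this]
    exact Finset.sum_congr rfl fun i _ => by
      rw [map_mul, hφrs i (lt_trans i.isLt han)]
  set gg : ℕ → SS n k := fun i => if h : i < a then φ (g ⟨i, h⟩) else 0 with hgg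
  have hggsyz : ∑ i ∈ range a, gg i * rsq n k ι m i = 0 := by
    rw [← Fin.sum_univ_eq_sum_range (fun i => gg i * rsq n k ι m i) a, ← hphi]
    exact Finset.sum_congr rfl fun i _ => by rw [hgg]; simp [i.isLt]
  have hregs : ∀ j < a, ∀ f', f' * rsq n k ι m j ∈ pidl (rsq n k ι m) j →
      f' ∈ pidl (rsq n k ι m) j :=
    fun j hj => IH j (lt_of_lt_of_le hj ham) (lt_trans hj han)
  obtain ⟨c, hcd, hca, hcg⟩ := koszul_syzygy a (rsq n k ι m) gg hregs hggsyz
  have Hi : ∀ i : Fin a, ∃ hh : SS n k,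
      hh * X (Sum.inr (ι m)) = g i - ∑ j ∈ range a, c i j * v j := by
    intro i
    apply Ideal.mem_span_singleton'.mp
    have e1 : φ (g i) = ∑ j ∈ range a, c ↑i j * rsq n k ι m j := by
      rw [← hcg ↑i i.isLt, hgg]
      simp [i.isLt]
    have e3 : ∑ j ∈ range a, c ↑i j * (rsq n k ι m j - v j)
        = (∑ j ∈ range a, c ↑i j * rsq n k ι m j) - ∑ j ∈ range a, c ↑i j * v j := by
      rw [← Finset.sum_sub_distrib]
      exact Finset.sum_congr rfl fun j _ => mul_sub _ _ _
    have e2 : g i - ∑ j ∈ range a, c ↑i j * v j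
        = (g i - φ (g i)) + ∑ j ∈ range a, c ↑i j * (rsq n k ι m j - v j) := by
      rw [e3, e1]; ring
    rw [e2]
    refine Ideal.add_mem _ (sub_aeval_mem v₀ (g i)) (Ideal.sum_mem _ fun j hj => ?_)
    have hjn : j < n := lt_trans (mem_range.mp hj) han
    have hsub : rsq n k ι m j - v j
        = -(X (Sum.inl ((⟨j, hjn⟩ : Fin n), ι m)) * X (Sum.inr (ι m))) := by
      rw [hv, rsq_eq hjn, rsq_eq hjn, Qp, Qp, sum_range_succ]
      ring
    rw [hsub]
    exact Ideal.mul_mem_left _ _ (Submodule.neg_mem _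
      (Ideal.mem_span_singleton'.mpr ⟨X (Sum.inl ((⟨j, hjn⟩ : Fin n), ι m)), rfl⟩))
  choose hh hhe using Hi
  -- final computation
  have key : ∀ i : Fin a, g i * v ↑i
      = (∑ j ∈ range a, c ↑i j * v j * v ↑i) + hh i * X (Sum.inr (ι m)) * v ↑i := by
    intro i
    rw [hhe i, ← Finset.sum_mul]
    ring
  have hsum : f * X (Sum.inr (ι m))
      = (∑ i ∈ range a, ∑ j ∈ range a, c i j * v j * v i)
        + X (Sum.inr (ι m)) * ∑ i : Fin a, hh i * v ↑i := by
    rw [← hg, Finset.sum_congr rfl fun i _ => key i, Finset.sum_add_distrib, Finset.mul_sum]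
    congr 1
    · rw [← Fin.sum_univ_eq_sum_range (fun i => ∑ j ∈ range a, c i j * v j * v i) a]
    · exact Finset.sum_congr rfl fun i _ => by ring
  rw [antisym_double_sum a c v hcd hca, zero_add] at hsum
  have hcan : f = ∑ i : Fin a, hh i * v ↑i := by
    have hx : (X (Sum.inr (ι m)) : SS n k) ≠ 0 := MvPolynomial.X_ne_zero _
    apply mul_left_cancel₀ hx
    rw [← hsum]; ring
  rw [hcan]
  exact Ideal.sum_mem _ fun i _ =>
    Ideal.mul_mem_left _ _ (Ideal.subset_span ⟨i, rfl⟩)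
end Main

section Main2
open Finset

variable {n k : ℕ}

set_option maxHeartbeats 1000000 in
lemma stepB (ι : ℕ → Fin k) (m : ℕ)
    (hinj : ∀ s ≤ m, ∀ t ≤ m, ι s = ι t → s = t)
    (a : ℕ) (ham : a ≤ m) (han : a < n)
    (hA : ∀ f : SS n k, f * X (Sum.inr (ι m)) ∈ pidl (rsq n k ι (m + 1)) a →
      f ∈ pidl (rsq n k ι (m + 1)) a)
    (f : SS n k) (hf : f * rsq n k ι (m + 1) a ∈ pidl (rsq n k ι (m + 1)) a) :
    f ∈ pidl (rsq n k ι (m + 1)) a := by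
  classical
  set a' : Fin n := ⟨a, han⟩ with ha'
  set u₀ : (Fin n × Fin k) ⊕ Fin k := Sum.inl (a', ι m) with hu₀
  set Φ : SS n k ≃ₐ[ℂ] Polynomial (MvPolynomial {v : (Fin n × Fin k) ⊕ Fin k // v ≠ u₀} ℂ) :=
    (renameEquiv ℂ (Equiv.optionSubtypeNe u₀).symm).trans
      (optionEquivLeft ℂ {v : (Fin n × Fin k) ⊕ Fin k // v ≠ u₀}) with hΦdef
  have hΦu : Φ (X u₀) = Polynomial.X := by
    rw [hΦdef, AlgEquiv.trans_apply, renameEquiv_apply, rename_X,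
      Equiv.optionSubtypeNe_symm_self, optionEquivLeft_X_none]
  have hΦX : ∀ (v) (h : v ≠ u₀), Φ (X v) = Polynomial.C (X (⟨v, h⟩ : {v // v ≠ u₀})) := by
    intro v h
    rw [hΦdef, AlgEquiv.trans_apply, renameEquiv_apply, rename_X,
      Equiv.optionSubtypeNe_symm_of_ne h, optionEquivLeft_X_some]
  have hne_inr : ∀ i : Fin k, (Sum.inr i : (Fin n × Fin k) ⊕ Fin k) ≠ u₀ := by
    intro i; simp [hu₀]
  set w' : MvPolynomial {v : (Fin n × Fin k) ⊕ Fin k // v ≠ u₀} ℂ :=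
    X (⟨Sum.inr (ι m), hne_inr (ι m)⟩ : {v // v ≠ u₀}) with hw'def
  set v : ℕ → SS n k := rsq n k ι (m + 1) with hv
  -- constants for rows < a
  have hconst : ∀ i : Fin a, ∃ y : MvPolynomial {v // v ≠ u₀} ℂ,
      Φ (v ↑i) = Polynomial.C y := by
    intro i
    have hin : (i : ℕ) < n := lt_trans i.isLt han
    have hrow : Sum.inl ((⟨↑i, hin⟩ : Fin n), ι m) ≠ u₀ := by
      rw [hu₀]
      simp only [ne_eq, Sum.inl.injEq, Prod.mk.injEq, not_and]
      intro hcon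
      exact absurd (congrArg Fin.val hcon) (Nat.ne_of_lt i.isLt)
    have hterm : ∀ t ∈ range (m + 1), ∃ ct,
        Φ (X (Sum.inl ((⟨↑i, hin⟩ : Fin n), ι t)) * X (Sum.inr (ι t)))
          = Polynomial.C ct := by
      intro t _
      have hne : Sum.inl ((⟨↑i, hin⟩ : Fin n), ι t) ≠ u₀ := by
        rw [hu₀]
        simp only [ne_eq, Sum.inl.injEq, Prod.mk.injEq, not_and]
        intro hcon
        exact absurd (congrArg Fin.val hcon) (Nat.ne_of_lt i.isLt)
      exact ⟨_, by rw [map_mul, hΦX _ hne, hΦX _ (hne_inr (ι t)), ← map_mul]⟩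
    choose ct hct using hterm
    refine ⟨∑ t ∈ (range (m + 1)).attach, ct ↑t t.2, ?_⟩
    rw [hv, rsq_eq hin, Qp, map_sum, ← Finset.sum_attach (range (m + 1))
      (fun t => Φ (X (Sum.inl ((⟨↑i, hin⟩ : Fin n), ι t)) * X (Sum.inr (ι t)))), map_sum]
    exact Finset.sum_congr rfl fun t _ => hct ↑t t.2
  choose y hy using hconst
  set J := pidl (rsq n k ι (m + 1)) a with hJ
  set I₀ : Ideal (MvPolynomial {v // v ≠ u₀} ℂ) := Ideal.span (Set.range y) with hI₀
  have hmap : Ideal.map (Φ : SS n k →+* _) J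
      = Ideal.map (Polynomial.C : MvPolynomial {v // v ≠ u₀} ℂ →+* _) I₀ := by
    rw [hJ, pidl, hI₀, Ideal.map_span, Ideal.map_span, ← Set.range_comp, ← Set.range_comp]
    congr 2
    funext i
    simp only [Function.comp_apply, RingHom.coe_coe]
    exact hy i
  have hmem : ∀ x : SS n k, x ∈ J ↔ Φ x ∈ Ideal.map (Φ : SS n k →+* _) J := by
    intro x
    exact (Ideal.apply_mem_of_equiv_iff (f := Φ.toRingEquiv)).symm
  have hsymmw : Φ.symm (Polynomial.C w') = X (Sum.inr (ι m)) := by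
    apply Φ.injective
    rw [AlgEquiv.apply_symm_apply, hΦX _ (hne_inr (ι m))]
  -- the w-colon property transfers
  have hwmem : ∀ b : MvPolynomial {v // v ≠ u₀} ℂ, b * w' ∈ I₀ → b ∈ I₀ := by
    intro b hb
    have h1 : Polynomial.C (b * w')
        ∈ Ideal.map (Polynomial.C : MvPolynomial {v // v ≠ u₀} ℂ →+* _) I₀ :=
      Ideal.mem_map_of_mem _ hb
    rw [← hmap] at h1
    have h2 : Φ.symm (Polynomial.C (b * w')) ∈ J := by
      rw [hmem, AlgEquiv.apply_symm_apply]
      exact h1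
    have h3 : Φ.symm (Polynomial.C (b * w'))
        = Φ.symm (Polynomial.C b) * X (Sum.inr (ι m)) := by
      rw [show (Polynomial.C (b * w') : Polynomial (MvPolynomial {v // v ≠ u₀} ℂ))
          = Polynomial.C b * Polynomial.C w' from map_mul _ _ _, map_mul, hsymmw]
    rw [h3] at h2
    have h4 := hA _ h2
    rw [hmem, AlgEquiv.apply_symm_apply, hmap, Ideal.mem_map_C_iff] at h4
    have h5 := h4 0
    rwa [Polynomial.coeff_C_zero] at h5
  -- image of q_a
  have htermA : ∀ t ∈ range m, ∃ ct,
      Φ (X (Sum.inl (a', ι t)) * X (Sum.inr (ι t))) = Polynomial.C ct := by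
    intro t ht
    have hne : Sum.inl (a', ι t) ≠ u₀ := by
      rw [hu₀]
      simp only [ne_eq, Sum.inl.injEq, Prod.mk.injEq, true_and]
      intro hcon
      exact absurd (hinj t (le_of_lt (mem_range.mp ht)) m le_rfl hcon)
        (Nat.ne_of_lt (mem_range.mp ht))
    exact ⟨_, by rw [map_mul, hΦX _ hne, hΦX _ (hne_inr (ι t)), ← map_mul]⟩
  choose cA hcA using htermA
  have hQa : Φ (v a) = Polynomial.X * Polynomial.C w'
      + Polynomial.C (∑ t ∈ (range m).attach, cA ↑t t.2) := by
    rw [hv, rsq_eq han, Qp, sum_range_succ, map_add, map_mul]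
    have e1 : Φ (X (Sum.inl ((⟨a, han⟩ : Fin n), ι m))) = Polynomial.X := by
      rw [← hu₀] at *
      exact hΦu
    rw [e1, hΦX _ (hne_inr (ι m)), map_sum,
      ← Finset.sum_attach (range m)
        (fun t => Φ (X (Sum.inl ((⟨a, han⟩ : Fin n), ι t)) * X (Sum.inr (ι t))))]
    rw [add_comm]
    congr 1
    rw [map_sum]
    exact Finset.sum_congr rfl fun t _ => hcA ↑t t.2
  -- conclude via the abstract polynomial lemma
  have hfq : Φ f * Φ (v a)
      ∈ Ideal.map (Polynomial.C : MvPolynomial {v // v ≠ u₀} ℂ →+* _) I₀ := by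
    rw [← map_mul, ← hmap]
    exact Ideal.mem_map_of_mem _ hf
  rw [hQa] at hfq
  have := stepB_abstract I₀ w' _ hwmem (Φ f) hfq
  rw [hmem, hmap]
  exact this
end Main2

section Final
open Finset

variable {n k : ℕ}

lemma colonMain : ∀ (m : ℕ) (ι : ℕ → Fin k), (∀ s < m, ∀ t < m, ι s = ι t → s = t) →
    ∀ a, a < m → ∀ (han : a < n), ∀ f : SS n k,
      f * rsq n k ι m a ∈ pidl (rsq n k ι m) a → f ∈ pidl (rsq n k ι m) a := by
  intro m
  induction m with
  | zero => omega
  | succ m ih =>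
    intro ι hinj a ham han f hf
    have hinj' : ∀ s ≤ m, ∀ t ≤ m, ι s = ι t → s = t :=
      fun s hs t ht => hinj s (by omega) t (by omega)
    have ham' : a ≤ m := by omega
    refine stepB ι m hinj' a ham' han (fun f' hf' => ?_) f hf
    exact stepA ι m hinj' a ham' han
      (fun j hj hjn => ih ι (fun s hs t ht => hinj s (by omega) t (by omega)) j hj hjn) f' hf'

lemma colon_isSMulRegular {R : Type*} [CommRing R] {I : Ideal R} {r : R}
    (h : ∀ f, f * r ∈ I → f ∈ I) :
    IsSMulRegular (R ⧸ (I • ⊤ : Submodule R R)) r := by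
  have hIT : (I • ⊤ : Submodule R R) = I := by
    rw [Ideal.smul_eq_mul, Ideal.mul_top]
  intro x y hxy
  obtain ⟨x, rfl⟩ := Submodule.Quotient.mk_surjective _ x
  obtain ⟨y, rfl⟩ := Submodule.Quotient.mk_surjective _ y
  simp only at hxy
  have hx : r • (Submodule.Quotient.mk x : R ⧸ (I • ⊤ : Submodule R R))
      = Submodule.Quotient.mk (r • x) := (Submodule.Quotient.mk_smul _ _ _).symm
  have hy' : r • (Submodule.Quotient.mk y : R ⧸ (I • ⊤ : Submodule R R))
      = Submodule.Quotient.mk (r • y) := (Submodule.Quotient.mk_smul _ _ _).symm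
  rw [hx, hy', Submodule.Quotient.eq, hIT] at hxy
  have h2 : (x - y) * r ∈ I := by
    have : r • x - r • y = (x - y) * r := by
      rw [smul_eq_mul, smul_eq_mul]; ring
    rwa [this] at hxy
  rw [Submodule.Quotient.eq, hIT]
  exact h (x - y) h2
end Final


theorem regular_sequence_q_aux (n k : ℕ) (hk : n ≤ k) :
    RingTheory.Sequence.IsRegular (MvPolynomial ((Fin n × Fin k) ⊕ Fin k) ℂ)
      (List.ofFn fun α : Fin n =>
        (∑ i : Fin k, X (Sum.inl (α, i)) * X (Sum.inr i) :
          MvPolynomial ((Fin n × Fin k) ⊕ Fin k) ℂ)) := by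
  classical
  set q : Fin n → SS n k := fun α => ∑ i : Fin k, X (Sum.inl (α, i)) * X (Sum.inr i) with hq
  refine ⟨⟨?_⟩, ?_⟩
  · intro i hlen
    rw [List.length_ofFn] at hlen
    have hk0 : 0 < k := lt_of_lt_of_le (lt_of_le_of_lt (Nat.zero_le i) hlen) hk
    set ι : ℕ → Fin k := fun t => ⟨t % k, Nat.mod_lt t hk0⟩ with hι
    have hinj : ∀ s < k, ∀ t < k, ι s = ι t → s = t := by
      intro s hs t ht hst
      have := congrArg Fin.val hst
      simpa [hι, Nat.mod_eq_of_lt hs, Nat.mod_eq_of_lt ht] using this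
    have hqr : ∀ (a : ℕ) (ha : a < n), rsq n k ι k a = q ⟨a, ha⟩ := by
      intro a ha
      rw [rsq_eq ha, Qp, hq]
      rw [← Fin.sum_univ_eq_sum_range
        (fun t => X (Sum.inl ((⟨a, ha⟩ : Fin n), ι t)) * X (Sum.inr (ι t))) k]
      exact Finset.sum_congr rfl fun i _ => by
        rw [show ι ↑i = i from Fin.ext (Nat.mod_eq_of_lt i.isLt)]
    have hofList : Ideal.ofList ((List.ofFn q).take i) = pidl (rsq n k ι k) i := by
      rw [← Fin.ofFn_take_eq_take_ofFn (le_of_lt hlen) q]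
      have hset : {r | r ∈ List.ofFn (Fin.take i (le_of_lt hlen) q)}
          = Set.range (Fin.take i (le_of_lt hlen) q) :=
        Set.ext fun x => List.mem_ofFn
      rw [Ideal.ofList, hset, pidl]
      refine congrArg Ideal.span (congrArg Set.range (funext fun j => ?_))
      exact (hqr ↑j (lt_of_lt_of_le j.isLt (le_of_lt hlen))).symm
    have hgetElem : (List.ofFn q)[i]'(by rw [List.length_ofFn]; exact hlen) = q ⟨i, hlen⟩ :=
      List.getElem_ofFn _
    rw [hgetElem, hofList, ← hqr i hlen]
    exact colon_isSMulRegular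
      (fun f hf => colonMain k ι hinj i (lt_of_lt_of_le hlen hk) hlen f hf)
  · intro hcon
    have h1 : (1 : SS n k) ∈ Ideal.ofList (List.ofFn q) := by
      have : (1 : SS n k) ∈ (Ideal.ofList (List.ofFn q) • ⊤ : Submodule (SS n k) (SS n k)) := by
        rw [← hcon]; trivial
      rwa [Ideal.smul_eq_mul, Ideal.mul_top] at this
    have hker : Ideal.ofList (List.ofFn q) ≤ RingHom.ker (constantCoeff :
        MvPolynomial ((Fin n × Fin k) ⊕ Fin k) ℂ →+* ℂ) := by
      rw [Ideal.ofList]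
      refine Ideal.span_le.mpr ?_
      intro x hx
      rw [Set.mem_setOf_eq, List.mem_ofFn] at hx
      obtain ⟨α, rfl⟩ := hx
      simp [hq, RingHom.mem_ker, constantCoeff_X]
    have := hker h1
    rw [RingHom.mem_ker, map_one] at this
    exact one_ne_zero this

/-- Let `P = ℂ[z_{αi}, w_i : 1 ≤ α ≤ n, 1 ≤ i ≤ k]` (the `z`-variables indexed by
`Sum.inl (α, i)` and the `w`-variables by `Sum.inr i`), with `k ≥ n`, and let
`q_α = Σ_{i=1}^k z_{αi} w_i`.  Then `q₁, …, q_n` is a regular sequence in `P`. -/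
theorem regular_sequence_q (n k : ℕ) (hk : n ≤ k) :
    RingTheory.Sequence.IsRegular (MvPolynomial ((Fin n × Fin k) ⊕ Fin k) ℂ)
      (List.ofFn fun α : Fin n =>
        (∑ i : Fin k, X (Sum.inl (α, i)) * X (Sum.inr i) :
          MvPolynomial ((Fin n × Fin k) ⊕ Fin k) ℂ)) := by
  exact regular_sequence_q_aux n k hk
end

section
/- Let S = ℂ[r_{ij}, w_i : 1 ≤ i ≤ j ≤ k] (with r_{ij} = r_{ji} as indeterminates) and define the cubic polynomials c_j = Σ_{i=1}^k r_{ij} w_i for 1 ≤ j ≤ k. Then c₁,…,c_k is a regular sequence in S. -/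
open MvPolynomial

noncomputable section RegSeqAux

namespace RegSeqAux

/-! ### Generic polynomial-ring lemmas -/

/-- If `u` is a non-zerodivisor mod `K`, then `C u * X + C b` is a
non-zerodivisor mod `K.map C` in `R[X]`. -/
lemma part2 {R : Type*} [CommRing R] (K : Ideal R) (u b : R)
    (hu : ∀ q, u * q ∈ K → q ∈ K) (f : Polynomial R)
    (hf : (Polynomial.C u * Polynomial.X + Polynomial.C b) * f ∈ K.map Polynomial.C) :
    f ∈ K.map Polynomial.C := by
  rw [Ideal.mem_map_C_iff] at hf ⊢
  have hcoeff : ∀ n : ℕ, u * f.coeff n + b * f.coeff (n + 1) ∈ K := by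
    intro n
    have := hf (n + 1)
    have hrw : ((Polynomial.C u * Polynomial.X + Polynomial.C b) * f).coeff (n+1)
        = u * f.coeff n + b * f.coeff (n + 1) := by
      rw [add_mul, Polynomial.coeff_add]
      rw [mul_assoc, mul_comm Polynomial.X f, ← mul_assoc]
      rw [Polynomial.coeff_mul_X, Polynomial.coeff_C_mul, Polynomial.coeff_C_mul]
    rwa [hrw] at this
  have H : ∀ j n : ℕ, f.natDegree < n + j → f.coeff n ∈ K := by
    intro j
    induction j with
    | zero =>
      intro n hn
      rw [Polynomial.coeff_eq_zero_of_natDegree_lt (by omega)]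
      exact K.zero_mem
    | succ j ih =>
      intro n hn
      have h1 : f.coeff (n + 1) ∈ K := ih (n + 1) (by omega)
      have h2 : u * f.coeff n ∈ K := by
        have := K.sub_mem (hcoeff n) (K.mul_mem_left b h1)
        simpa using this
      exact hu _ h2
  intro n
  exact H (f.natDegree + 1) n (by omega)

variable {τ : Type*} [DecidableEq τ]

/-- Splitting off the variable `y` from a multivariate polynomial ring. -/
def E (y : τ) : MvPolynomial τ ℂ ≃ₐ[ℂ] Polynomial (MvPolynomial {t : τ // t ≠ y} ℂ) :=
  (renameEquiv ℂ (Equiv.optionSubtypeNe y).symm).trans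
    (optionEquivLeft ℂ {t : τ // t ≠ y})

lemma E_X_y (y : τ) : E y (X y) = Polynomial.X := by
  simp only [E, AlgEquiv.trans_apply, renameEquiv_apply, rename_X,
    Equiv.optionSubtypeNe_symm_self, optionEquivLeft_X_none]

lemma E_X_ne (y t : τ) (h : t ≠ y) :
    E y (X t) = Polynomial.C (X (⟨t, h⟩ : {t : τ // t ≠ y})) := by
  simp only [E, AlgEquiv.trans_apply, renameEquiv_apply, rename_X,
    Equiv.optionSubtypeNe_symm_of_ne h, optionEquivLeft_X_some]

lemma E_rename (y : τ) (q : MvPolynomial {t : τ // t ≠ y} ℂ) :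
    E y (rename Subtype.val q) = Polynomial.C q := by
  induction q using MvPolynomial.induction_on with
  | C a =>
    simp only [rename_C, E, AlgEquiv.trans_apply, renameEquiv_apply, optionEquivLeft_C]
  | add p q hp hq => rw [map_add, map_add, hp, hq, map_add]
  | mul_X p t ih =>
    rw [map_mul, map_mul, ih, rename_X, E_X_ne y t.1 t.2, ← map_mul, Subtype.coe_eta]

lemma mem_span_iff (y : τ) (G₀ : Set (MvPolynomial {t : τ // t ≠ y} ℂ))
    (f : MvPolynomial τ ℂ) :
    f ∈ Ideal.span (rename (Subtype.val : {t : τ // t ≠ y} → τ) '' G₀) ↔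
      E y f ∈ Ideal.map Polynomial.C (Ideal.span G₀) := by
  have h1 : Ideal.map ((E y : MvPolynomial τ ℂ ≃+* _))
      (Ideal.span (rename (Subtype.val : {t : τ // t ≠ y} → τ) '' G₀))
      = Ideal.map Polynomial.C (Ideal.span G₀) := by
    rw [Ideal.map_span, Ideal.map_span, ← Set.image_comp]
    congr 1
    ext x
    constructor
    · rintro ⟨q, hq, rfl⟩
      exact ⟨q, hq, (E_rename y q).symm⟩
    · rintro ⟨q, hq, rfl⟩
      exact ⟨q, hq, by simp [Function.comp, E_rename y q]⟩
  constructor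
  · intro h
    rw [← h1]
    exact Ideal.mem_map_of_mem _ h
  · intro h
    rw [← h1] at h
    obtain ⟨x, hx, hxe⟩ := (Ideal.mem_map_of_equiv _ _).1 h
    have hxf : x = f := (E y).injective hxe
    rwa [← hxf]

/-- Key lemma: if all generators of `G`, as well as `u` and `b`, do not involve the
variable `y`, and `u` is a non-zerodivisor modulo `span G`, then `u * X y + b` is a
non-zerodivisor modulo `span G`. -/
lemma key (y : τ) (G : Set (MvPolynomial τ ℂ))
    (hG : ∀ g ∈ G, g ∈ Set.range (rename (Subtype.val : {t : τ // t ≠ y} → τ)))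
    (u b : MvPolynomial τ ℂ)
    (hu : u ∈ Set.range (rename (Subtype.val : {t : τ // t ≠ y} → τ)))
    (hb : b ∈ Set.range (rename (Subtype.val : {t : τ // t ≠ y} → τ)))
    (hreg : ∀ q, u * q ∈ Ideal.span G → q ∈ Ideal.span G)
    (f : MvPolynomial τ ℂ) (hf : (u * X y + b) * f ∈ Ideal.span G) :
    f ∈ Ideal.span G := by
  obtain ⟨u₀, rfl⟩ := hu
  obtain ⟨b₀, rfl⟩ := hb
  set ρ : MvPolynomial {t : τ // t ≠ y} ℂ →ₐ[ℂ] MvPolynomial τ ℂ :=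
    rename (Subtype.val : {t : τ // t ≠ y} → τ) with hρ
  set G₀ : Set (MvPolynomial {t : τ // t ≠ y} ℂ) := ρ ⁻¹' G with hG₀
  have hGeq : ρ '' G₀ = G :=
    Set.image_preimage_eq_of_subset (fun g hg => hG g hg)
  -- translate the regularity hypothesis to the small ring
  have hu₀ : ∀ q₀, u₀ * q₀ ∈ Ideal.span G₀ → q₀ ∈ Ideal.span G₀ := by
    intro q₀ h
    have h2 : ρ u₀ * ρ q₀ ∈ Ideal.span G := by
      rw [← map_mul]
      have h2' : ρ (u₀ * q₀) ∈ Ideal.map ρ.toRingHom (Ideal.span G₀) :=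
        Ideal.mem_map_of_mem _ h
      rwa [Ideal.map_span, show ⇑ρ.toRingHom = ⇑ρ from rfl, hGeq] at h2'
    have h3 := hreg _ h2
    rw [← hGeq, mem_span_iff, E_rename] at h3
    rw [Ideal.mem_map_C_iff] at h3
    have := h3 0
    simpa using this
  rw [← hGeq, mem_span_iff] at hf ⊢
  rw [map_mul, map_add, map_mul, E_rename, E_rename, E_X_y] at hf
  exact part2 _ u₀ b₀ hu₀ _ hf

end RegSeqAux

namespace RegSeqAux

/-! ### The specific setting -/

open Sum

abbrev τk (k : ℕ) := Sym2 (Fin k) ⊕ Fin k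

abbrev Sk (k : ℕ) := MvPolynomial (τk k) ℂ

variable {k : ℕ}

def cp (j : Fin k) : Sk k := ∑ i : Fin k, X (inl s(i, j)) * X (inr i)

def wp (i : Fin k) : Sk k := X (inr i)

lemma sym2_ne {i l m : Fin k} (hl : l ≠ m) : s(i, l) ≠ s(m, m) := by
  intro h
  rw [Sym2.eq_iff] at h
  rcases h with ⟨rfl, rfl⟩ | ⟨rfl, rfl⟩ <;> exact hl rfl

lemma cp_decomp (m : Fin k) :
    cp m = wp m * X (inl s(m, m)) +
      ∑ i ∈ Finset.univ.erase m, X (inl s(i, m)) * X (inr i) := by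
  rw [cp, ← Finset.add_sum_erase _ _ (Finset.mem_univ m)]
  rw [wp, mul_comm]

/-- Membership of a variable in the range of `rename Subtype.val`. -/
lemma X_mem_range {y t : τk k} (h : t ≠ y) :
    (X t : Sk k) ∈ Set.range (rename (Subtype.val : {t : τk k // t ≠ y} → τk k)) :=
  ⟨X ⟨t, h⟩, rename_X _ _⟩

lemma wp_mem_range {y : τk k} {t : Fin k} (h : (inr t : τk k) ≠ y) :
    wp t ∈ Set.range (rename (Subtype.val : {t : τk k // t ≠ y} → τk k)) :=
  X_mem_range h

lemma mem_range_of_subalg {y : τk k} {p : Sk k}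
    (hp : p ∈ (rename (Subtype.val : {t : τk k // t ≠ y} → τk k)).range) :
    p ∈ Set.range (rename (Subtype.val : {t : τk k // t ≠ y} → τk k)) := hp

lemma cp_mem_range {y : τk k} {l : Fin k}
    (h : ∀ i : Fin k, (inl s(i, l) : τk k) ≠ y) (h2 : ∀ i : Fin k, (inr i : τk k) ≠ y) :
    cp l ∈ Set.range (rename (Subtype.val : {t : τk k // t ≠ y} → τk k)) := by
  apply mem_range_of_subalg
  apply Subalgebra.sum_mem
  intro i _
  exact mul_mem (X_mem_range (h i)) (X_mem_range (h2 i))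

def Gset (L T : Finset (Fin k)) : Set (Sk k) :=
  (cp '' ↑L) ∪ (wp '' ↑T)

lemma Gset_insert_L (m : Fin k) (L T : Finset (Fin k)) :
    Gset (insert m L) T = insert (cp m) (Gset L T) := by
  simp only [Gset, Finset.coe_insert, Set.image_insert_eq, Set.insert_union]

lemma Gset_insert_T (t : Fin k) (L T : Finset (Fin k)) :
    Gset L (insert t T) = insert (wp t) (Gset L T) := by
  simp only [Gset, Finset.coe_insert, Set.image_insert_eq, Set.union_insert]

lemma Gset_mono_T (L : Finset (Fin k)) {T T' : Finset (Fin k)} (h : T ⊆ T') :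
    Gset L T ⊆ Gset L T' :=
  Set.union_subset_union_right _ (Set.image_mono (Finset.coe_subset.2 h))

/-- Base case: the `w` variables alone. -/
lemma M0 : ∀ (T : Finset (Fin k)) (i : Fin k), i ∉ T →
    ∀ f : Sk k, wp i * f ∈ Ideal.span (Gset ∅ T) → f ∈ Ideal.span (Gset ∅ T) := by
  intro T
  induction T using Finset.induction_on with
  | empty =>
    intro i _ f hf
    have hG : Gset (∅ : Finset (Fin k)) (∅ : Finset (Fin k)) = (∅ : Set (Sk k)) := by
      simp [Gset]
    rw [hG, Ideal.span_empty] at hf ⊢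
    rw [Ideal.mem_bot] at hf ⊢
    rcases mul_eq_zero.1 hf with h | h
    · exact absurd h (MvPolynomial.X_ne_zero _)
    · exact h
  | @insert t T' ht ih =>
    intro i hi f hf
    have hit : i ≠ t := fun h => hi (h ▸ Finset.mem_insert_self t T')
    have hiT' : i ∉ T' := fun h => hi (Finset.mem_insert_of_mem h)
    rw [Gset_insert_T] at hf
    obtain ⟨g, a, ha, heq⟩ := Ideal.mem_span_insert.1 hf
    -- Step 1: g ∈ span (Gset ∅ (insert i T'))
    have hg : g ∈ Ideal.span (Gset ∅ (insert i T')) := by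
      have h1 : g * wp t ∈ Ideal.span (Gset ∅ (insert i T')) := by
        have hwi : wp i ∈ Ideal.span (Gset ∅ (insert i T')) :=
          Ideal.subset_span (Or.inr ⟨i, by simp, rfl⟩)
        have ha' : a ∈ Ideal.span (Gset ∅ (insert i T')) :=
          Ideal.span_mono (Gset_mono_T _ (Finset.subset_insert _ _)) ha
        have : g * wp t = wp i * f - a := by rw [heq]; ring
        rw [this]
        exact Ideal.sub_mem _ (Ideal.mul_mem_right _ _ hwi) ha'
      apply key (inr t) (Gset ∅ (insert i T')) ?_ 1 0 ?_ ?_ ?_ g ?_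
      · rintro x (⟨l, hl, rfl⟩ | ⟨t', ht', rfl⟩)
        · simp at hl
        · refine wp_mem_range ?_
          have ht'2 : t' ∈ insert i T' := by exact_mod_cast ht'
          have htt : t' ≠ t := by
            rcases Finset.mem_insert.1 ht'2 with rfl | h
            · exact hit
            · exact fun hc => ht (hc ▸ h)
          simp [htt]
      · exact ⟨1, map_one _⟩
      · exact ⟨0, map_zero _⟩
      · intro q hq; simpa using hq
      · have : (1 * X (inr t) + 0) * g = g * wp t := by rw [wp]; ring
        rw [this]
        exact h1
    -- Step 2
    rw [Gset_insert_T] at hg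
    obtain ⟨h, a₂, ha₂, heq₂⟩ := Ideal.mem_span_insert.1 hg
    have hstep : wp i * (f - h * wp t) ∈ Ideal.span (Gset ∅ T') := by
      have : wp i * (f - h * wp t) = a₂ * wp t + a := by
        have e1 : wp i * f = g * wp t + a := heq
        have e2 : g = h * wp i + a₂ := heq₂
        rw [mul_sub, e1, e2]; ring
      rw [this]
      have hwt : wp t ∈ Ideal.span (Gset ∅ (insert t T')) :=
        Ideal.subset_span (Or.inr ⟨t, by simp, rfl⟩)
      exact Ideal.add_mem _ (Ideal.mul_mem_right _ _ ha₂) ha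
    have := ih i hiT' _ hstep
    rw [Gset_insert_T]
    have hmem : f = (f - h * wp t) + h * wp t := by ring
    rw [hmem]
    refine Ideal.add_mem _ (Ideal.span_mono (Set.subset_insert _ _) this) ?_
    exact Ideal.mul_mem_left _ _ (Ideal.subset_span (Set.mem_insert _ _))

/-- Main induction: `wp i` is a non-zerodivisor modulo the ideal generated by
`{cp l : l ∈ L} ∪ {wp t : t ∈ T}` as long as `i ∉ L ∪ T` and `L, T` are disjoint. -/
lemma M : ∀ (L T : Finset (Fin k)), (∀ x ∈ L, x ∉ T) → ∀ i : Fin k, i ∉ L → i ∉ T →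
    ∀ f : Sk k, wp i * f ∈ Ideal.span (Gset L T) → f ∈ Ideal.span (Gset L T) := by
  intro L
  induction L using Finset.induction_on with
  | empty => intro T _ i _ hiT f hf; exact M0 T i hiT f hf
  | @insert m L' hm ih =>
    intro T hdisj i hiL hiT f hf
    have him : i ≠ m := fun h => hiL (h ▸ Finset.mem_insert_self m L')
    have hiL' : i ∉ L' := fun h => hiL (Finset.mem_insert_of_mem h)
    have hmT : m ∉ T := hdisj m (Finset.mem_insert_self m L')
    have hdisj' : ∀ x ∈ L', x ∉ T := fun x hx => hdisj x (Finset.mem_insert_of_mem hx)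
    rw [Gset_insert_L] at hf
    obtain ⟨g, a, ha, heq⟩ := Ideal.mem_span_insert.1 hf
    -- Step 1: g ∈ span (Gset L' (insert i T))
    have hg : g ∈ Ideal.span (Gset L' (insert i T)) := by
      have h1 : g * cp m ∈ Ideal.span (Gset L' (insert i T)) := by
        have hwi : wp i ∈ Ideal.span (Gset L' (insert i T)) :=
          Ideal.subset_span (Or.inr ⟨i, by simp, rfl⟩)
        have ha' : a ∈ Ideal.span (Gset L' (insert i T)) :=
          Ideal.span_mono (Gset_mono_T _ (Finset.subset_insert _ _)) ha
        have : g * cp m = wp i * f - a := by rw [heq]; ring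
        rw [this]
        exact Ideal.sub_mem _ (Ideal.mul_mem_right _ _ hwi) ha'
      set y : τk k := inl s(m, m) with hy
      apply key y (Gset L' (insert i T)) ?_ (wp m)
        (∑ i' ∈ Finset.univ.erase m, X (inl s(i', m)) * X (inr i')) ?_ ?_ ?_ g ?_
      · rintro x (⟨l, hl, rfl⟩ | ⟨t', _, rfl⟩)
        · have hlm : l ≠ m := fun h => hm (h ▸ (by exact_mod_cast hl))
          exact cp_mem_range (fun i' => by simp [hy, sym2_ne hlm]) (fun i' => by simp [hy])
        · exact wp_mem_range (by simp [hy])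
      · exact wp_mem_range (by simp [hy])
      · apply mem_range_of_subalg
        apply Subalgebra.sum_mem
        intro i' hi'
        have hi'm : i' ≠ m := (Finset.mem_erase.1 hi').1
        exact mul_mem (X_mem_range (by simp [hy, hi'm]))
          (X_mem_range (by simp [hy]))
      · -- regularity of wp m mod Gset L' (insert i T) : IH
        intro q hq
        refine ih (insert i T) ?_ m hm ?_ q hq
        · intro x hx
          rw [Finset.mem_insert]
          rintro (rfl | hxT)
          · exact hiL' hx
          · exact hdisj' x hx hxT
        · rw [Finset.mem_insert]
          rintro (rfl | hmT')
          · exact him rfl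
          · exact hmT hmT'
      · rw [hy, ← cp_decomp, mul_comm]
        exact h1
    -- Step 2
    rw [Gset_insert_T] at hg
    obtain ⟨h, a₂, ha₂, heq₂⟩ := Ideal.mem_span_insert.1 hg
    have hstep : wp i * (f - h * cp m) ∈ Ideal.span (Gset L' T) := by
      have : wp i * (f - h * cp m) = a₂ * cp m + a := by
        have e1 : wp i * f = g * cp m + a := heq
        have e2 : g = h * wp i + a₂ := heq₂
        rw [mul_sub, e1, e2]; ring
      rw [this]
      have hcm : cp m ∈ Ideal.span (Gset (insert m L') T) :=
        Ideal.subset_span (Or.inl ⟨m, by simp, rfl⟩)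
      exact Ideal.add_mem _ (Ideal.mul_mem_right _ _ ha₂) ha
    have := ih T hdisj' i hiL' hiT _ hstep
    rw [Gset_insert_L]
    have hmem : f = (f - h * cp m) + h * cp m := by ring
    rw [hmem]
    refine Ideal.add_mem _ (Ideal.span_mono (Set.subset_insert _ _) this) ?_
    exact Ideal.mul_mem_left _ _ (Ideal.subset_span (Set.mem_insert _ _))

/-- `cp j` is a non-zerodivisor modulo the `cp l`, `l ∈ L`, when `j ∉ L`. -/
lemma cp_regular (L : Finset (Fin k)) (j : Fin k) (hj : j ∉ L)
    (f : Sk k) (hf : cp j * f ∈ Ideal.span (Gset L ∅)) : f ∈ Ideal.span (Gset L ∅) := by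
  set y : τk k := inl s(j, j) with hy
  apply key y (Gset L ∅) ?_ (wp j)
    (∑ i' ∈ Finset.univ.erase j, X (inl s(i', j)) * X (inr i')) ?_ ?_ ?_ f ?_
  · rintro x (⟨l, hl, rfl⟩ | ⟨t', ht', rfl⟩)
    · have hlj : l ≠ j := fun h => hj (h ▸ (by exact_mod_cast hl))
      exact cp_mem_range (fun i' => by simp [hy, sym2_ne hlj]) (fun i' => by simp [hy])
    · simp at ht'
  · exact wp_mem_range (by simp [hy])
  · apply mem_range_of_subalg
    apply Subalgebra.sum_mem
    intro i' hi'
    have hi'j : i' ≠ j := (Finset.mem_erase.1 hi').1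
    exact mul_mem (X_mem_range (by simp [hy, hi'j])) (X_mem_range (by simp [hy]))
  · intro q hq
    exact M L ∅ (by simp) j hj (by simp) q hq
  · rw [hy, ← cp_decomp]
    exact hf

end RegSeqAux

end RegSeqAux

open RegSeqAux Sum in
/-- Let `S = ℂ[r_{ij}, w_i]` where the `r_{ij}` are symmetric indeterminates
(indexed by unordered pairs `Sym2 (Fin k)`, so that `r_{ij} = r_{ji}`) and
`w₁, …, w_k` are further indeterminates, and let `c_j = Σ_{i=1}^k r_{ij} w_i`.
Then `c₁, …, c_k` is a regular sequence in `S`. -/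
theorem regular_sequence_c (k : ℕ) :
    RingTheory.Sequence.IsRegular (MvPolynomial (Sym2 (Fin k) ⊕ Fin k) ℂ)
      (List.ofFn fun j : Fin k =>
        (∑ i : Fin k, X (Sum.inl s(i, j)) * X (Sum.inr i) :
          MvPolynomial (Sym2 (Fin k) ⊕ Fin k) ℂ)) := by
  classical
  show RingTheory.Sequence.IsRegular (Sk k) (List.ofFn fun j : Fin k => cp j)
  have hlen : (List.ofFn fun j : Fin k => cp j).length = k := by simp
  -- the prefix ideals
  have htake : ∀ n : ℕ, Ideal.ofList ((List.ofFn fun j : Fin k => cp j).take n) =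
      Ideal.span (Gset (Finset.univ.filter (fun l : Fin k => (l : ℕ) < n)) ∅) := by
    intro n
    unfold Ideal.ofList
    congr 1
    ext x
    simp only [Gset, Finset.coe_empty, Set.image_empty, Set.union_empty, Set.mem_setOf_eq]
    constructor
    · intro hx
      obtain ⟨m, hm, hval⟩ := List.mem_iff_getElem.1 hx
      have hmk : m < n ∧ m < k := by simpa [List.length_take] using hm
      refine ⟨⟨m, hmk.2⟩, by simp [hmk.1], ?_⟩
      rw [← hval, List.getElem_take, List.getElem_ofFn]
    · rintro ⟨l, hl, rfl⟩
      simp only [Finset.coe_filter, Finset.mem_univ, true_and, Set.mem_setOf_eq] at hl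
      rw [List.mem_iff_getElem]
      refine ⟨l, by simp [List.length_take]; omega, ?_⟩
      rw [List.getElem_take, List.getElem_ofFn]
  constructor
  · -- weakly regular
    rw [RingTheory.Sequence.isWeaklyRegular_iff]
    intro n hn
    have hnk : n < k := by simpa using hn
    have hget : (List.ofFn fun j : Fin k => cp j)[n] = cp ⟨n, hnk⟩ := by
      rw [List.getElem_ofFn]
    rw [hget, htake n]
    set I : Ideal (Sk k) :=
      Ideal.span (Gset (Finset.univ.filter (fun l : Fin k => (l : ℕ) < n)) ∅) with hI
    have hIsmul : (I • ⊤ : Submodule (Sk k) (Sk k)) = I := by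
      rw [smul_eq_mul, Ideal.mul_top]
    intro a b hab
    obtain ⟨x, rfl⟩ := Submodule.Quotient.mk_surjective _ a
    obtain ⟨z, rfl⟩ := Submodule.Quotient.mk_surjective _ b
    have hab' : cp ⟨n, hnk⟩ • (Submodule.Quotient.mk x :
        Sk k ⧸ (I • ⊤ : Submodule (Sk k) (Sk k))) = cp ⟨n, hnk⟩ • Submodule.Quotient.mk z := hab
    rw [← Submodule.Quotient.mk_smul, ← Submodule.Quotient.mk_smul,
      Submodule.Quotient.eq] at hab'
    rw [Submodule.Quotient.eq]
    rw [hIsmul] at hab' ⊢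
    have hmem : cp ⟨n, hnk⟩ * (x - z) ∈ I := by
      have heq : cp ⟨n, hnk⟩ • x - cp ⟨n, hnk⟩ • z = cp ⟨n, hnk⟩ * (x - z) := by
        simp only [smul_eq_mul]; ring
      rwa [heq] at hab'
    refine cp_regular _ ⟨n, hnk⟩ ?_ _ hmem
    simp
  · -- the ideal is proper
    intro hcontra
    have h1 : Ideal.ofList (List.ofFn fun j : Fin k => cp j) = ⊤ := by
      have h0 : (Ideal.ofList (List.ofFn fun j : Fin k => cp j) • ⊤ :
          Submodule (Sk k) (Sk k)) = Ideal.ofList (List.ofFn fun j : Fin k => cp j) := by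
        rw [smul_eq_mul, Ideal.mul_top]
      rw [← h0, ← hcontra]
    have h2 : (1 : Sk k) ∈ Ideal.ofList (List.ofFn fun j : Fin k => cp j) :=
      h1 ▸ Submodule.mem_top
    have h3 : Ideal.ofList (List.ofFn fun j : Fin k => cp j) ≤
        RingHom.ker (MvPolynomial.eval (fun _ => (0 : ℂ))) := by
      unfold Ideal.ofList
      rw [Ideal.span_le]
      intro x hx
      simp only [Set.mem_setOf_eq, List.mem_ofFn] at hx
      obtain ⟨j, rfl⟩ := hx
      simp [RingHom.mem_ker, cp]
    have h4 := h3 h2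
    simp [RingHom.mem_ker] at h4
end

section
/- If R is a Noetherian graded commutative ring and a₁,…,a_n is a regular sequence of homogeneous elements of positive degree in R, then any permutation of a₁,…,a_n is also a regular sequence. -/
open DirectSum Pointwise

/-- Graded Nakayama lemma: if `I, J` are homogeneous ideals, `a` is homogeneous of
positive degree, and `J ≤ I ⊔ aJ`, then `J ≤ I`. -/
lemma graded_nakayama_aux {R : Type*} [CommRing R]
    (𝒜 : ℕ → AddSubmonoid R) [GradedRing 𝒜] {I J : Ideal R}
    (hI : ∀ (m : ℕ) (x : R), x ∈ I → (DirectSum.decompose 𝒜 x m : R) ∈ I)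
    (hJ : ∀ (m : ℕ) (x : R), x ∈ J → (DirectSum.decompose 𝒜 x m : R) ∈ J)
    {a : R} {d : ℕ} (hd : 0 < d) (ha : a ∈ 𝒜 d)
    (h : J ≤ I ⊔ Ideal.span {a} * J) : J ≤ I := by
  have key : ∀ e : ℕ, ∀ x ∈ J, x ∈ 𝒜 e → x ∈ I := by
    intro e
    induction e using Nat.strong_induction_on with
    | _ e ih =>
      intro x hxJ hxe
      obtain ⟨i, hi, z, hz, hiz⟩ := Submodule.mem_sup.mp (h hxJ)
      obtain ⟨w, hwJ, hw⟩ := Ideal.mem_span_singleton_mul.mp hz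
      -- take the degree-`e` component
      have hxdec : (DirectSum.decompose 𝒜 x e : R) = x :=
        DirectSum.decompose_of_mem_same 𝒜 hxe
      have hsplit : x = (DirectSum.decompose 𝒜 i e : R)
          + (DirectSum.decompose 𝒜 z e : R) := by
        rw [← hxdec, ← hiz, DirectSum.decompose_add]
        rfl
      by_cases hde : d ≤ e
      · have hzdec : (DirectSum.decompose 𝒜 z e : R)
            = a * (DirectSum.decompose 𝒜 w (e - d) : R) := by
          rw [← hw]; exact DirectSum.coe_decompose_mul_of_left_mem_of_le 𝒜 ha hde
        have hwI : (DirectSum.decompose 𝒜 w (e - d) : R) ∈ I := by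
          refine ih (e - d) (by omega) _ (hJ _ _ hwJ) (SetLike.coe_mem _)
        rw [hsplit, hzdec]
        exact I.add_mem (hI _ _ hi) (I.mul_mem_left a hwI)
      · have hzdec : (DirectSum.decompose 𝒜 z e : R) = 0 := by
          rw [← hw]; exact DirectSum.coe_decompose_mul_of_left_mem_of_not_le 𝒜 ha hde
        rw [hsplit, hzdec, add_zero]
        exact hI _ _ hi
  intro x hx
  classical
  rw [← DirectSum.sum_support_decompose 𝒜 x]
  exact I.sum_mem fun m _ => key m _ (hJ m x hx) (SetLike.coe_mem _)

/-- If `R` is a Noetherian `ℕ`-graded commutative ring and `a₁, …, a_n` is a regular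
sequence of homogeneous elements of positive degree in `R`, then any permutation of
`a₁, …, a_n` is again a regular sequence. -/
theorem regular_sequence_permute {R : Type*} [CommRing R] [IsNoetherianRing R]
    (𝒜 : ℕ → AddSubmonoid R) [GradedRing 𝒜] {n : ℕ} (a : Fin n → R)
    (hhom : ∀ i, ∃ d : ℕ, 0 < d ∧ a i ∈ 𝒜 d)
    (hreg : RingTheory.Sequence.IsRegular R (List.ofFn a))
    (σ : Equiv.Perm (Fin n)) :
    RingTheory.Sequence.IsRegular R (List.ofFn (a ∘ σ)) := by
  have hperm : (List.ofFn a).Perm (List.ofFn (a ∘ σ)) := by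
    exact (Equiv.Perm.ofFn_comp_perm σ a).symm
  obtain ⟨hw, hne⟩ := hreg
  constructor
  · -- weak regularity is preserved under permutation, via graded Nakayama
    refine hw.prototype_perm hperm ?_
    intro b c rs₀ hsub
    dsimp only
    intro hK
    -- all elements involved are homogeneous of positive degree
    have hmem : ∀ x ∈ (b :: c :: rs₀), ∃ d : ℕ, 0 < d ∧ x ∈ 𝒜 d := by
      intro x hx
      have := hsub.subset hx
      rw [List.mem_ofFn] at this
      obtain ⟨i, rfl⟩ := this
      exact hhom i
    obtain ⟨db, hdb, hb⟩ := hmem b (by simp)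
    obtain ⟨dc, hdc, hc⟩ := hmem c (by simp)
    set I : Ideal R := Ideal.ofList rs₀ with hIdef
    have hIhom : ∀ (m : ℕ) (x : R), x ∈ I → (DirectSum.decompose 𝒜 x m : R) ∈ I := by
      have : I.IsHomogeneous 𝒜 := by
        refine Ideal.homogeneous_span 𝒜 _ ?_
        rintro x hx
        obtain ⟨d, _, hxd⟩ := hmem x (by
          simp only [Set.mem_setOf_eq] at hx
          exact List.mem_cons_of_mem _ (List.mem_cons_of_mem _ hx))
        exact ⟨d, hxd⟩
      exact fun m x hx => this m hx
    -- define J as the colon ideal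
    set K : Submodule R (R ⧸ (I • ⊤ : Submodule R R)) :=
      Submodule.torsionBy R (R ⧸ (I • ⊤ : Submodule R R)) c with hKdef
    set J : Ideal R := I.colon (Ideal.span {c}) with hJdef
    have hmemJ : ∀ x : R, x ∈ J ↔ c * x ∈ I := by
      intro x
      rw [hJdef, Ideal.mem_colon_span_singleton, mul_comm]
    have hJhom : ∀ (m : ℕ) (x : R), x ∈ J → (DirectSum.decompose 𝒜 x m : R) ∈ J := by
      intro m x hx
      rw [hmemJ] at hx ⊢
      have : (DirectSum.decompose 𝒜 (c * x) (dc + m) : R)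
          = c * (DirectSum.decompose 𝒜 x m : R) := by
        rw [DirectSum.coe_decompose_mul_of_left_mem_of_le 𝒜 hc (Nat.le_add_right _ _),
          Nat.add_sub_cancel_left]
      rw [← this]
      exact hIhom _ _ hx
    -- membership translations for the quotient module
    have hIsmul : (I • ⊤ : Submodule R R) = I := by
      rw [Ideal.smul_eq_mul, Ideal.mul_top]
    have hKmem : ∀ x : R, Submodule.Quotient.mk (p := (I • ⊤ : Submodule R R)) x ∈ K
        ↔ c * x ∈ I := by
      intro x
      rw [hKdef, Submodule.mem_torsionBy_iff, ← Submodule.Quotient.mk_smul,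
        Submodule.Quotient.mk_eq_zero, hIsmul, smul_eq_mul]
    -- J ≤ I ⊔ bJ
    have hJle : J ≤ I ⊔ Ideal.span {b} * J := by
      intro x hx
      have hxK : Submodule.Quotient.mk (p := (I • ⊤ : Submodule R R)) x ∈ K :=
        (hKmem x).mpr ((hmemJ x).mp hx)
      rw [hK] at hxK
      obtain ⟨k, hkK, hk⟩ := Set.mem_smul_set.mp hxK
      obtain ⟨y, rfl⟩ := Submodule.Quotient.mk_surjective _ k
      have hyJ : y ∈ J := (hmemJ y).mpr ((hKmem y).mp hkK)
      have : x - b * y ∈ I := by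
        rw [← hIsmul, ← Submodule.Quotient.mk_eq_zero, Submodule.Quotient.mk_sub,
          sub_eq_zero, ← hk, ← Submodule.Quotient.mk_smul, smul_eq_mul]
        rfl
      have hxeq : x = (x - b * y) + b * y := by ring
      rw [hxeq]
      exact Submodule.add_mem _ (Submodule.mem_sup_left this)
        (Submodule.mem_sup_right (Ideal.mem_span_singleton_mul.mpr ⟨y, hyJ, rfl⟩))
    have hJI : J ≤ I := graded_nakayama_aux 𝒜 hIhom hJhom hdb hb hJle
    -- conclude K = ⊥
    refine le_bot_iff.mp ?_
    intro k hkK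
    obtain ⟨y, rfl⟩ := Submodule.Quotient.mk_surjective _ k
    have : y ∈ I := hJI ((hmemJ y).mpr ((hKmem y).mp hkK))
    rw [Submodule.mem_bot, Submodule.Quotient.mk_eq_zero, hIsmul]
    exact this
  · -- properness of the ideal is preserved
    intro htop
    apply hne
    have : Ideal.ofList (List.ofFn (a ∘ σ)) = Ideal.ofList (List.ofFn a) := by
      unfold Ideal.ofList
      congr 1
      ext x
      exact hperm.symm.mem_iff
    rwa [this] at htop
end

section
/- Let Z = (z_{αi}) be an n × k matrix of indeterminates over ℂ, and for strictly increasing index tuples I ⊆ {1,…,n}, J ⊆ {1,…,k} each of size ℓ, let f_{I,J}(Z) denote the ℓ × ℓ minor of Z with rows I and columns J. Then f_{I,J} is annihilated by each of the operators Δ_{ij} = Σ_{α=1}^n ∂²/(∂z_{αi} ∂z_{αj}) for all 1 ≤ i, j ≤ k. -/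
open MvPolynomial

lemma prod_X_eq_monomial' {σ : Type*} {ι : Type*} (s : Finset ι) (g : ι → σ) :
    (∏ b ∈ s, (X (g b) : MvPolynomial σ ℂ)) =
      monomial (∑ b ∈ s, Finsupp.single (g b) 1) 1 := by
  classical
  induction s using Finset.cons_induction with
  | empty => simp [MvPolynomial.monomial_zero']
  | cons a s ha ih =>
      rw [Finset.prod_cons, Finset.sum_cons, ih, X, monomial_mul, one_mul]

lemma double_pderiv_zero {n k ℓ : ℕ} (f : Fin ℓ → Fin n) (g : Fin ℓ → Fin k)
    (hf : Function.Injective f) (α : Fin n) (i j : Fin k) :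
    pderiv (α, i) (pderiv (α, j)
      (∏ b : Fin ℓ, (X (f b, g b) : MvPolynomial (Fin n × Fin k) ℂ))) = 0 := by
  classical
  rw [prod_X_eq_monomial']
  set d : (Fin n × Fin k) →₀ ℕ := ∑ b : Fin ℓ, Finsupp.single (f b, g b) 1 with hd
  rw [pderiv_monomial, pderiv_monomial]
  by_cases h : ∃ b, (f b, g b) = (α, j)
  · obtain ⟨b₀, hb₀⟩ := h
    have hdi : d (α, i) = if (f b₀, g b₀) = (α, i) then 1 else 0 := by
      rw [hd, Finsupp.coe_finset_sum, Finset.sum_apply]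
      rw [Finset.sum_eq_single b₀]
      · simp [Finsupp.single_apply]
      · intro b _ hb
        have : (f b, g b) ≠ (α, i) := by
          intro hcontra
          apply hb
          apply hf
          have h1 : f b = α := congrArg Prod.fst hcontra
          have h2 : f b₀ = α := congrArg Prod.fst hb₀
          rw [h1, h2]
        simp [Finsupp.single_apply, this]
      · simp
    have key : d (α, i) - (Finsupp.single (α, j) 1 : (Fin n × Fin k) →₀ ℕ) (α, i) = 0 := by
      rw [hdi, Finsupp.single_apply]
      by_cases hij : i = j
      · subst hij
        simp [hb₀]
      · have : (f b₀, g b₀) ≠ (α, i) := by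
          rw [hb₀]; simp [Ne.symm hij]
        have h2 : (α, j) ≠ (α, i) := by simp [Ne.symm hij]
        simp [this, h2]
    rw [Finsupp.tsub_apply, key]
    simp
  · have hdj : d (α, j) = 0 := by
      rw [hd, Finsupp.coe_finset_sum, Finset.sum_apply]
      apply Finset.sum_eq_zero
      intro b _
      have : (f b, g b) ≠ (α, j) := fun hc => h ⟨b, hc⟩
      simp [Finsupp.single_apply, this]
    rw [hdj]
    simp

/-- Let `Z = (z_{αi})` be an `n × k` matrix of indeterminates over `ℂ`, and for strictly
increasing tuples `I : Fin ℓ → Fin n` and `J : Fin ℓ → Fin k` let `f_{I,J}` be the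
`ℓ × ℓ` minor of `Z` with rows `I` and columns `J`.  Then `f_{I,J}` is annihilated by
every operator `Δ_{ij} = Σ_{α=1}^n ∂²/(∂z_{αi} ∂z_{αj})`, i.e. it is harmonic. -/
theorem minor_is_harmonic (n k ℓ : ℕ) (I : Fin ℓ → Fin n) (J : Fin ℓ → Fin k)
    (hI : StrictMono I) (hJ : StrictMono J) (i j : Fin k) :
    (∑ α : Fin n,
        pderiv (α, i) (pderiv (α, j)
          (Matrix.det (Matrix.of fun a b : Fin ℓ =>
            (X (I a, J b) : MvPolynomial (Fin n × Fin k) ℂ))))) = 0 := by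
  rw [Matrix.det_apply]
  apply Finset.sum_eq_zero
  intro α _
  simp only [map_sum, map_zsmul]
  apply Finset.sum_eq_zero
  intro σ _
  have h0 : pderiv (α, i) (pderiv (α, j)
      (∏ b : Fin ℓ, (X (I (σ b), J b) : MvPolynomial (Fin n × Fin k) ℂ))) = 0 :=
    double_pderiv_zero (fun b => I (σ b)) J (hI.injective.comp σ.injective) α i j
  rw [Derivation.map_smul_of_tower, Derivation.map_smul_of_tower]
  simp only [Matrix.of_apply]
  rw [h0, smul_zero]
end

section
/- Let S = ℂ[r_{ij}, w_i] with cubics c_j = Σ_i r_{ij} w_i as above. The composite map ℂ[w₁,…,w_k] → S → S/(c₁,…,c_k) is injective. Consequently S/(c₁,…,c_k) is not finitely generated as a module over the subring ℂ[r_{ij}]. -/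
open MvPolynomial

/-- The ring `S = ℂ[r_{ij}, w_i]`: symmetric indeterminates `r_{ij}` indexed by
unordered pairs `Sym2 (Fin k)`, together with `w₁, …, w_k`. -/
noncomputable abbrev Stmt5.S (k : ℕ) := MvPolynomial (Sym2 (Fin k) ⊕ Fin k) ℂ

/-- The ideal generated by the cubics `c_j = Σ_{i=1}^k r_{ij} w_i`. -/
noncomputable def Stmt5.cIdeal (k : ℕ) : Ideal (Stmt5.S k) :=
  Ideal.span (Set.range fun j : Fin k =>
    (∑ i : Fin k, X (Sum.inl s(i, j)) * X (Sum.inr i) : Stmt5.S k))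

/-- The composite `ℂ[w₁,…,w_k] → S → S/(c₁,…,c_k)`. -/
noncomputable def Stmt5.wMap (k : ℕ) :
    MvPolynomial (Fin k) ℂ →+* Stmt5.S k ⧸ Stmt5.cIdeal k :=
  (Ideal.Quotient.mk (Stmt5.cIdeal k)).comp
    (rename (Sum.inr : Fin k → Sym2 (Fin k) ⊕ Fin k)).toRingHom

/-- The structure map `ℂ[r_{ij}] → S → S/(c₁,…,c_k)`, exhibiting the quotient as an
algebra (in particular a module) over the subring `ℂ[r_{ij}]`. -/
noncomputable def Stmt5.rMap (k : ℕ) :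
    MvPolynomial (Sym2 (Fin k)) ℂ →+* Stmt5.S k ⧸ Stmt5.cIdeal k :=
  (Ideal.Quotient.mk (Stmt5.cIdeal k)).comp
    (rename (Sum.inl : Sym2 (Fin k) → Sym2 (Fin k) ⊕ Fin k)).toRingHom

/-- The assignment `r_{ij} ↦ 0`, `w_i ↦ w_i`. -/
noncomputable def Stmt5.assign (k : ℕ) : Sym2 (Fin k) ⊕ Fin k → MvPolynomial (Fin k) ℂ :=
  Sum.elim (fun _ => 0) X

/-- `S → ℂ[w]` sending `r_{ij} ↦ 0`, `w_i ↦ w_i`. -/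
noncomputable def Stmt5.retr (k : ℕ) : Stmt5.S k →+* MvPolynomial (Fin k) ℂ :=
  (aeval (Stmt5.assign k)).toRingHom

theorem Stmt5.cIdeal_le_ker (k : ℕ) : Stmt5.cIdeal k ≤ RingHom.ker (Stmt5.retr k) := by
  rw [Stmt5.cIdeal, Ideal.span_le]
  rintro _ ⟨j, rfl⟩
  simp [RingHom.mem_ker, Stmt5.retr, Stmt5.assign]

/-- The induced map `S/(c₁,…,c_k) → ℂ[w]`. -/
noncomputable def Stmt5.retrBar (k : ℕ) : (Stmt5.S k ⧸ Stmt5.cIdeal k) →+* MvPolynomial (Fin k) ℂ :=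
  Ideal.Quotient.lift (Stmt5.cIdeal k) (Stmt5.retr k) (fun a ha => RingHom.mem_ker.mp (Stmt5.cIdeal_le_ker k ha))

theorem Stmt5.retrBar_wMap (k : ℕ) (p : MvPolynomial (Fin k) ℂ) :
    Stmt5.retrBar k (Stmt5.wMap k p) = p := by
  show Stmt5.retrBar k (Ideal.Quotient.mk _ (rename Sum.inr p)) = p
  rw [Stmt5.retrBar, Ideal.Quotient.lift_mk]
  show aeval (Stmt5.assign k) (rename Sum.inr p) = p
  rw [aeval_rename]
  have : (Stmt5.assign k ∘ Sum.inr : Fin k → MvPolynomial (Fin k) ℂ) = X := rfl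
  rw [this, aeval_X_left_apply]

theorem Stmt5.retrBar_rMap (k : ℕ) (a : MvPolynomial (Sym2 (Fin k)) ℂ) :
    Stmt5.retrBar k (Stmt5.rMap k a) = C (constantCoeff a) := by
  show Stmt5.retrBar k (Ideal.Quotient.mk _ (rename Sum.inl a)) = _
  rw [Stmt5.retrBar, Ideal.Quotient.lift_mk]
  show aeval (Stmt5.assign k) (rename Sum.inl a) = _
  rw [aeval_rename]
  have : (Stmt5.assign k ∘ Sum.inl : Sym2 (Fin k) → MvPolynomial (Fin k) ℂ)
      = fun _ => 0 := rfl
  rw [this, aeval_zero']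
  rfl

theorem Stmt5.retrBar_surjective (k : ℕ) : Function.Surjective (Stmt5.retrBar k) :=
  fun p => ⟨Stmt5.wMap k p, Stmt5.retrBar_wMap k p⟩

set_option synthInstance.maxHeartbeats 1000000 in
set_option maxHeartbeats 1000000 in
/-- The composite map `ℂ[w₁,…,w_k] → S/(c₁,…,c_k)` is injective; consequently
`S/(c₁,…,c_k)` is not finitely generated as a module over the subring `ℂ[r_{ij}]`. -/
theorem quotient_by_cubics_injective_and_infinite (k : ℕ) (hk : 0 < k) :
    Function.Injective (Stmt5.wMap k) ∧
      ¬ @Module.Finite (MvPolynomial (Sym2 (Fin k)) ℂ) (Stmt5.S k ⧸ Stmt5.cIdeal k) _ _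
          (@Algebra.toModule _ _ _ _ (Stmt5.rMap k).toAlgebra) := by
  constructor
  · exact Function.LeftInverse.injective (Stmt5.retrBar_wMap k)
  · intro hfin
    letI alg : Algebra (MvPolynomial (Sym2 (Fin k)) ℂ) (Stmt5.S k ⧸ Stmt5.cIdeal k) :=
      (Stmt5.rMap k).toAlgebra
    -- ℂ[w] is finite-dimensional over ℂ
    have hCfin : Module.Finite ℂ (MvPolynomial (Fin k) ℂ) := by
      obtain ⟨s, hs⟩ := hfin.1
      refine ⟨⟨s.image (Stmt5.retrBar k), ?_⟩⟩
      rw [eq_top_iff]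
      intro x _
      obtain ⟨y, rfl⟩ := Stmt5.retrBar_surjective k x
      have hy : y ∈ Submodule.span (MvPolynomial (Sym2 (Fin k)) ℂ) (s : Set _) := by
        rw [hs]; trivial
      refine Submodule.span_induction ?_ ?_ ?_ ?_ hy
      · intro z hz
        exact Submodule.subset_span (Finset.mem_coe.mpr (Finset.mem_image_of_mem _ hz))
      · simp
      · intro a b _ _ ha hb
        rw [RingHom.map_add (Stmt5.retrBar k)]; exact Submodule.add_mem _ ha hb
      · intro a z _ hz
        have : (Stmt5.retrBar k) (a • z) = (constantCoeff a) • (Stmt5.retrBar k z) := by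
          have hsm : a • z = Stmt5.rMap k a * z := rfl
          rw [hsm, RingHom.map_mul (Stmt5.retrBar k), Stmt5.retrBar_rMap]
          rw [smul_eq_C_mul]
        rw [this]
        exact Submodule.smul_mem _ _ hz
    -- map onto Polynomial ℂ
    have hsurj : Function.Surjective
        (MvPolynomial.aeval (fun _ => Polynomial.X) :
          MvPolynomial (Fin k) ℂ →ₐ[ℂ] Polynomial ℂ) := by
      intro q
      refine ⟨Polynomial.aeval (X ⟨0, hk⟩ : MvPolynomial (Fin k) ℂ) q, ?_⟩
      have hcomp : ((MvPolynomial.aeval (fun _ => Polynomial.X)).comp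
          (Polynomial.aeval (X ⟨0, hk⟩ : MvPolynomial (Fin k) ℂ)) :
            Polynomial ℂ →ₐ[ℂ] Polynomial ℂ) = AlgHom.id ℂ _ := by
        apply Polynomial.algHom_ext; simp
      exact AlgHom.congr_fun hcomp q
    have : Module.Finite ℂ (Polynomial ℂ) :=
      Module.Finite.of_surjective
        (MvPolynomial.aeval (fun _ => Polynomial.X) :
          MvPolynomial (Fin k) ℂ →ₐ[ℂ] Polynomial ℂ).toLinearMap hsurj
    exact Polynomial.not_finite this
end

section
/- Let P = ℂ[z_{αi}, w_i : 1 ≤ α ≤ n, 1 ≤ i ≤ k] with k ≥ n and q_α = Σ_{i=1}^k z_{αi} w_i. The map ℂ[w₁,…,w_k] → P/(q₁,…,q_n) sending f to its class is injective. -/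
open MvPolynomial

/-- Let `P = ℂ[z_{αi}, w_i : 1 ≤ α ≤ n, 1 ≤ i ≤ k]` with `k ≥ n`, and
`q_α = Σ_{i=1}^k z_{αi} w_i`.  The map `ℂ[w₁,…,w_k] → P/(q₁,…,q_n)` sending a
polynomial in the `w`'s to its class in the quotient is injective. -/
theorem w_polynomials_inject_in_quotient (n k : ℕ) (hk : n ≤ k) :
    Function.Injective
      ((Ideal.Quotient.mk (Ideal.span (Set.range fun α : Fin n =>
          (∑ i : Fin k, X (Sum.inl (α, i)) * X (Sum.inr i) :
            MvPolynomial ((Fin n × Fin k) ⊕ Fin k) ℂ)))).comp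
        (rename (Sum.inr : Fin k → (Fin n × Fin k) ⊕ Fin k)).toRingHom) := by
  set I := Ideal.span (Set.range fun α : Fin n =>
      (∑ i : Fin k, X (Sum.inl (α, i)) * X (Sum.inr i) :
        MvPolynomial ((Fin n × Fin k) ⊕ Fin k) ℂ)) with hI
  -- evaluation sending z's to 0 and w's to themselves
  set φ : MvPolynomial ((Fin n × Fin k) ⊕ Fin k) ℂ →ₐ[ℂ] MvPolynomial (Fin k) ℂ :=
    aeval (Sum.elim (fun _ => 0) X) with hφ
  have hker : I ≤ RingHom.ker φ.toRingHom := by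
    rw [hI, Ideal.span_le]
    rintro _ ⟨α, rfl⟩
    simp [RingHom.mem_ker, hφ]
  have key : ∀ p : MvPolynomial (Fin k) ℂ,
      (Ideal.Quotient.liftₐ I φ hker)
        (((Ideal.Quotient.mk I).comp (rename (Sum.inr : Fin k → (Fin n × Fin k) ⊕ Fin k)).toRingHom) p) = p := by
    intro p
    simp only [RingHom.coe_comp, Function.comp_apply, AlgHom.toRingHom_eq_coe,
      RingHom.coe_coe, Ideal.Quotient.liftₐ_apply, Ideal.Quotient.lift_mk]
    change φ (rename Sum.inr p) = p
    rw [hφ, aeval_rename]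
    exact aeval_X_left_apply p
  intro a b hab
  have := congrArg (Ideal.Quotient.liftₐ I φ hker) hab
  rwa [key, key] at this
end

section
/- Let P = ℂ[z_{αi}, w_i : 1 ≤ α ≤ n, 1 ≤ i ≤ k] with k > n, let det₊ denote the determinant of the n × n matrix (z_{αi})_{1 ≤ α,i ≤ n}, and let q_α = Σ_{i=1}^k z_{αi} w_i. Then the map ℂ[w_{n+1},…,w_k] → P/(q₁,…,q_n) sending f to the class of f·det₊ is injective. -/
open MvPolynomial

/-- `P = ℂ[z_{αi}, w_i]` with `z`-variables indexed by `Fin n × Fin k` and `w`-variables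
by `Fin k`. -/
noncomputable abbrev Stmt7.P (n k : ℕ) := MvPolynomial ((Fin n × Fin k) ⊕ Fin k) ℂ

/-- The determinant `det₊` of the upper-left `n × n` block `(z_{αi})_{1 ≤ α,i ≤ n}`. -/
noncomputable def Stmt7.detPlus (n k : ℕ) (h : n ≤ k) : Stmt7.P n k :=
  Matrix.det (Matrix.of fun α i : Fin n =>
    (X (Sum.inl (α, Fin.castLE h i)) : Stmt7.P n k))

/-- The ideal generated by the quadratics `q_α = Σ_{i=1}^k z_{αi} w_i`. -/
noncomputable def Stmt7.qIdeal (n k : ℕ) : Ideal (Stmt7.P n k) :=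
  Ideal.span (Set.range fun α : Fin n =>
    (∑ i : Fin k, X (Sum.inl (α, i)) * X (Sum.inr i) : Stmt7.P n k))

/-- For `k > n`, the map `ℂ[w_{n+1},…,w_k] → P/(q₁,…,q_n)` sending `f` to the class of
`f · det₊` is injective.  Here `ℂ[w_{n+1},…,w_k]` is the polynomial ring on the
`w`-variables with index `≥ n`. -/
theorem det_plus_inject_in_quotient (n k : ℕ) (hk : n < k) :
    Function.Injective (fun f : MvPolynomial {i : Fin k // n ≤ (i : ℕ)} ℂ =>
      Ideal.Quotient.mk (Stmt7.qIdeal n k)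
        ((rename (fun i : {i : Fin k // n ≤ (i : ℕ)} =>
            (Sum.inr i.1 : (Fin n × Fin k) ⊕ Fin k)) f) *
          Stmt7.detPlus n k hk.le)) := by
  -- the distinguished last variable index
  have hkpos : 0 < k := lt_of_le_of_lt (Nat.zero_le n) hk
  set L : Fin k := ⟨k - 1, Nat.sub_lt hkpos one_pos⟩ with hL
  have hnL : n ≤ (L : ℕ) := by simp [hL]; omega
  -- the specialization
  set g : (Fin n × Fin k) ⊕ Fin k → MvPolynomial (Fin k) ℂ := fun s =>
    match s with
    | Sum.inl (α, i) =>
        if (i : ℕ) = (α : ℕ) then X L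
        else if i = L then -(X (Fin.castLE hk.le α)) else 0
    | Sum.inr i => X i with hg
  set φ : Stmt7.P n k →ₐ[ℂ] MvPolynomial (Fin k) ℂ := aeval g with hφ
  -- φ kills the generators
  have hker : Stmt7.qIdeal n k ≤ RingHom.ker (φ : Stmt7.P n k →+* MvPolynomial (Fin k) ℂ) := by
    rw [Stmt7.qIdeal, Ideal.span_le]
    rintro _ ⟨α, rfl⟩
    have hαL : Fin.castLE hk.le α ≠ L := by
      intro h
      have := congrArg (Fin.val) h
      simp [hL] at this
      omega
    have hcomp : ∀ i : Fin k, φ (X (Sum.inl (α, i)) * X (Sum.inr i)) =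
        (if (i : ℕ) = (α : ℕ) then X L
          else if i = L then -(X (Fin.castLE hk.le α)) else 0) * X i := by
      intro i
      simp [hφ, hg]
    simp only [SetLike.mem_coe, RingHom.mem_ker, AlgHom.coe_ringHom_mk, map_sum]
    have : ∀ i : Fin k, (φ : Stmt7.P n k →+* MvPolynomial (Fin k) ℂ)
        (X (Sum.inl (α, i)) * X (Sum.inr i)) =
        (if (i : ℕ) = (α : ℕ) then X L
          else if i = L then -(X (Fin.castLE hk.le α)) else 0) * X i := by
      intro i
      simp [hφ, hg]
    rw [Finset.sum_congr rfl (fun i _ => this i)]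
    rw [Fintype.sum_eq_add (a := Fin.castLE hk.le α) (b := L) hαL]
    · have h1 : ((Fin.castLE hk.le α : Fin k) : ℕ) = (α : ℕ) := rfl
      have h2 : ¬ ((L : ℕ) = (α : ℕ)) := by
        intro h; exact absurd (h ▸ hnL) (Nat.not_le.mpr α.isLt)
      simp [h1, h2]
      ring
    · intro c hc
      rcases hc with ⟨hc1, hc2⟩
      have : ¬ ((c : ℕ) = (α : ℕ)) := by
        intro h
        exact hc1 (by ext; simpa using h)
      simp [this, hc2]
  -- φ of the determinant
  have hdet : φ (Stmt7.detPlus n k hk.le) = (X L) ^ n := by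
    rw [Stmt7.detPlus, AlgHom.map_det]
    have hM : (Matrix.of fun α i : Fin n =>
        (X (Sum.inl (α, Fin.castLE hk.le i)) : Stmt7.P n k)).map φ =
        Matrix.diagonal (fun _ : Fin n => (X L : MvPolynomial (Fin k) ℂ)) := by
      ext α i
      have hiL : Fin.castLE hk.le i ≠ L := by
        intro h
        have := congrArg (Fin.val) h
        simp [hL] at this
        omega
      by_cases hiα : i = α
      · subst hiα
        simp [hφ, hg, Matrix.diagonal]
      · have h3 : ¬ ((i : ℕ) = (α : ℕ)) := fun h => hiα (Fin.ext h)
        simp [hφ, hg, Matrix.diagonal, h3, hiL, Ne.symm hiα]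
    rw [AlgHom.mapMatrix_apply, hM, Matrix.det_diagonal, Finset.prod_const, Finset.card_univ, Fintype.card_fin]
  -- φ of the renamed polynomial
  have hren : ∀ f : MvPolynomial {i : Fin k // n ≤ (i : ℕ)} ℂ,
      φ (rename (fun i : {i : Fin k // n ≤ (i : ℕ)} =>
        (Sum.inr i.1 : (Fin n × Fin k) ⊕ Fin k)) f) = rename Subtype.val f := by
    intro f
    rw [hφ, aeval_rename]
    have heq : (aeval (g ∘ fun i : {i : Fin k // n ≤ (i : ℕ)} => Sum.inr i.1) :
        MvPolynomial {i : Fin k // n ≤ (i : ℕ)} ℂ →ₐ[ℂ] MvPolynomial (Fin k) ℂ) =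
        rename Subtype.val := by
      apply MvPolynomial.algHom_ext
      intro i
      simp [hg]
    rw [heq]
  -- conclusion
  intro f₁ f₂ hEq
  simp only [Ideal.Quotient.eq] at hEq
  have hφeq := hker hEq
  rw [RingHom.mem_ker] at hφeq
  have h0 : φ (rename (fun i : {i : Fin k // n ≤ (i : ℕ)} =>
      (Sum.inr i.1 : (Fin n × Fin k) ⊕ Fin k)) f₁ * Stmt7.detPlus n k hk.le -
      rename (fun i : {i : Fin k // n ≤ (i : ℕ)} =>
      (Sum.inr i.1 : (Fin n × Fin k) ⊕ Fin k)) f₂ * Stmt7.detPlus n k hk.le) = 0 := hφeq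
  rw [map_sub, sub_eq_zero, map_mul, map_mul, hdet, hren, hren] at h0
  have hXL : (X L : MvPolynomial (Fin k) ℂ) ^ n ≠ 0 := pow_ne_zero _ (X_ne_zero _)
  have := mul_right_cancel₀ hXL h0
  exact rename_injective Subtype.val Subtype.val_injective this
end

section
/- Let (M, d) be a filtered cochain complex with decreasing, bounded above, exhaustive filtration preserved by d. If H^{ℓ-1}(gr(M)) = 0 and H^{ℓ+1}(gr(M)) = 0, then H^ℓ(M) ≅ H^ℓ(gr(M)). -/
set_option maxHeartbeats 2000000


/-- **If `H^{ℓ-1}(gr M) = 0` and `H^{ℓ+1}(gr M) = 0` then `H^ℓ(M) ≅ H^ℓ(gr M)`.**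
Let `(M, d)` be a cochain complex of `ℂ`-vector spaces indexed by `ℤ` with a decreasing
filtration `F` preserved by `d`, exhaustive and bounded above.  Fix a degree
`ℓ = b + 1 + 1`.  Vanishing of `H^{ℓ∓1}(gr M)` is expressed elementwise as in the
theory of the spectral sequence of a filtered complex.  The conclusion identifies
`H^ℓ(M) = ker d / im d` with `H^ℓ(gr M)`, the direct sum over `p` of the cohomologies
`E₁^{p} = Z_p / B_p` of the associated graded complex in degree `ℓ`, where
`Z_p = {x ∈ F^p M^ℓ : d x ∈ F^{p+1}}` and `B_p = d(F^p M^{ℓ-1}) + (F^{p+1} M^ℓ ∩ Z_p)`. -/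
theorem cohomology_iso_gr_cohomology
    (M : ℤ → Type*) [∀ i, AddCommGroup (M i)] [∀ i, Module ℂ (M i)]
    (d : ∀ i, M i →ₗ[ℂ] M (i + 1))
    (hdd : ∀ i (x : M i), d (i + 1) (d i x) = 0)
    (F : ℤ → ∀ i, Submodule ℂ (M i))
    (hdec : ∀ p i, F (p + 1) i ≤ F p i)
    (hdF : ∀ p i, ∀ x ∈ F p i, d i x ∈ F p (i + 1))
    (hexh : ∀ i (x : M i), ∃ p, x ∈ F p i)
    (hbdd : ∃ N, ∀ p, N ≤ p → ∀ i, F p i = ⊥)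
    (b : ℤ)
    -- `H^{ℓ-1}(gr M) = 0`, where `ℓ - 1 = b + 1`:
    (hgr₁ : ∀ p, ∀ x ∈ F p (b + 1), d (b + 1) x ∈ F (p + 1) (b + 1 + 1) →
      ∃ y ∈ F p b, ∃ z ∈ F (p + 1) (b + 1), x = d b y + z)
    -- `H^{ℓ+1}(gr M) = 0`, where `ℓ + 1 = b + 1 + 1 + 1`:
    (hgr₂ : ∀ p, ∀ x ∈ F p (b + 1 + 1 + 1),
      d (b + 1 + 1 + 1) x ∈ F (p + 1) (b + 1 + 1 + 1 + 1) →
      ∃ y ∈ F p (b + 1 + 1), ∃ z ∈ F (p + 1) (b + 1 + 1 + 1), x = d (b + 1 + 1) y + z) :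
    -- `H^ℓ(M) ≅ H^ℓ(gr M) = ⨁_p E₁^p` in degree `ℓ = b + 1 + 1`:
    let Zker : Submodule ℂ (M (b + 1 + 1)) := LinearMap.ker (d (b + 1 + 1))
    let Bsub : Submodule ℂ (M (b + 1 + 1)) := LinearMap.range (d (b + 1))
    let Z : ℤ → Submodule ℂ (M (b + 1 + 1)) := fun p =>
      F p (b + 1 + 1) ⊓ (F (p + 1) (b + 1 + 1 + 1)).comap (d (b + 1 + 1))
    let B : ℤ → Submodule ℂ (M (b + 1 + 1)) := fun p =>
      (F p (b + 1)).map (d (b + 1)) ⊔ (F (p + 1) (b + 1 + 1) ⊓ Z p)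
    Nonempty ((Zker ⧸ Bsub.comap Zker.subtype) ≃ₗ[ℂ]
      DirectSum ℤ (fun p => (Z p ⧸ (B p).comap (Z p).subtype))) := by
  intro Zker Bsub Z B
  classical
  obtain ⟨N, hN⟩ := hbdd
  -- monotonicity of the filtration
  have Fmono : ∀ p q : ℤ, p ≤ q → ∀ i, F q i ≤ F p i := by
    intro p q hpq i
    obtain ⟨n, rfl⟩ := Int.le.dest hpq
    induction n with
    | zero => simp
    | succ n ih =>
      refine le_trans ?_ (ih (by push_cast; linarith))
      have := hdec (p + n) i
      convert this using 2
      push_cast; ring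
  -- Lemma Z: any element of Z_p can be corrected by something in F^{p+1} to a true cocycle
  have lemZ : ∀ k : ℕ, ∀ p q : ℤ, p + 1 ≤ q → N ≤ q + k →
      ∀ x ∈ F p (b + 1 + 1), d (b + 1 + 1) x ∈ F q (b + 1 + 1 + 1) →
      ∃ w ∈ F (p + 1) (b + 1 + 1), d (b + 1 + 1) x = d (b + 1 + 1) w := by
    intro k
    induction k with
    | zero =>
      intro p q hpq hNq x hx hdx
      refine ⟨0, Submodule.zero_mem _, ?_⟩
      have hq : F q (b + 1 + 1 + 1) = ⊥ := hN q (by simpa using hNq) _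
      rw [hq, Submodule.mem_bot] at hdx
      simp [hdx]
    | succ k ih =>
      intro p q hpq hNq x hx hdx
      have hddx : d (b + 1 + 1 + 1) (d (b + 1 + 1) x) ∈ F (q + 1) (b + 1 + 1 + 1 + 1) := by
        rw [hdd]; exact Submodule.zero_mem _
      obtain ⟨y, hy, z, hz, hxyz⟩ := hgr₂ q (d (b + 1 + 1) x) hdx hddx
      have hy' : y ∈ F p (b + 1 + 1) := Fmono p q (by linarith) _ hy
      have hdxy : d (b + 1 + 1) (x - y) ∈ F (q + 1) (b + 1 + 1 + 1) := by
        have hq : d (b + 1 + 1) (x - y) = z := by rw [map_sub, hxyz]; abel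
        rw [hq]; exact hz
      obtain ⟨w, hw, hdw⟩ := ih p (q + 1) (by linarith)
        (by push_cast at hNq ⊢; linarith) (x - y) (Submodule.sub_mem _ hx hy') hdxy
      refine ⟨y + w, Submodule.add_mem _ (Fmono (p + 1) q hpq _ hy) hw, ?_⟩
      rw [map_sub] at hdw
      rw [map_add, ← hdw]
      abel
  -- Lemma B: a boundary lying in F^q is a boundary of an element of F^q
  have lemB : ∀ k : ℕ, ∀ p q : ℤ, q ≤ p + k → ∀ u ∈ F p (b + 1),
      d (b + 1) u ∈ F q (b + 1 + 1) → ∃ u' ∈ F q (b + 1), d (b + 1) u' = d (b + 1) u := by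
    intro k
    induction k with
    | zero =>
      intro p q hqp u hu _
      exact ⟨u, Fmono q p (by simpa using hqp) _ hu, rfl⟩
    | succ k ih =>
      intro p q hqp u hu hdu
      by_cases hqp' : q ≤ p
      · exact ⟨u, Fmono q p hqp' _ hu, rfl⟩
      · have hp1q : p + 1 ≤ q := by linarith
        have hdu' : d (b + 1) u ∈ F (p + 1) (b + 1 + 1) := Fmono (p + 1) q hp1q _ hdu
        obtain ⟨y, hy, z, hz, huyz⟩ := hgr₁ p u hu hdu'
        have hdz : d (b + 1) z = d (b + 1) u := by
          rw [huyz, map_add, hdd]; abel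
        obtain ⟨u', hu', hdu'2⟩ := ih (p + 1) q (by push_cast at hqp ⊢; linarith) z hz
          (by rw [hdz]; exact hdu)
        exact ⟨u', hu', by rw [hdu'2, hdz]⟩
  -- the submodule of cocycles in F^p
  set K : ℤ → Submodule ℂ (M (b + 1 + 1)) := fun p => F p (b + 1 + 1) ⊓ Zker with hK
  have KleZ : ∀ p, K p ≤ Z p := by
    intro p x hx
    have h0 : d (b + 1 + 1) x = 0 := hx.2
    exact ⟨hx.1, Submodule.mem_comap.mpr (by rw [h0]; exact Submodule.zero_mem _)⟩
  -- ψ p : K p → E₁ p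
  set ψ : ∀ p : ℤ, (K p →ₗ[ℂ] (Z p ⧸ (B p).comap (Z p).subtype)) := fun p =>
    (((B p).comap (Z p).subtype).mkQ).comp (Submodule.inclusion (KleZ p)) with hψ
  have ψ_apply : ∀ p (v : K p),
      ψ p v = Submodule.Quotient.mk (⟨(v : M (b + 1 + 1)), KleZ p v.2⟩ : Z p) := by
    intro p v; rfl
  -- ψ p is surjective
  have ψsurj : ∀ p, Function.Surjective (ψ p) := by
    intro p e
    obtain ⟨⟨x, hxZ⟩, rfl⟩ := Submodule.Quotient.mk_surjective _ e
    have hx1 : x ∈ F p (b + 1 + 1) := hxZ.1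
    have hx2 : d (b + 1 + 1) x ∈ F (p + 1) (b + 1 + 1 + 1) := hxZ.2
    obtain ⟨w, hw, hdw⟩ := lemZ (N - (p + 1)).toNat p (p + 1) le_rfl
      (by have := Int.self_le_toNat (N - (p + 1)); linarith) x hx1 hx2
    have hxK : x - w ∈ K p := by
      refine ⟨Submodule.sub_mem _ hx1 (hdec p _ hw), ?_⟩
      exact LinearMap.mem_ker.mpr (by rw [map_sub, hdw, sub_self])
    refine ⟨⟨x - w, hxK⟩, ?_⟩
    rw [ψ_apply]
    rw [Submodule.Quotient.eq]
    have hwB : w ∈ B p := by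
      apply Submodule.mem_sup_right
      exact ⟨hw, ⟨hdec p _ hw, by simpa [Submodule.mem_comap, ← hdw] using hx2⟩⟩
    have : ((⟨x - w, KleZ p hxK⟩ : Z p) - ⟨x, hxZ⟩ : Z p) = ⟨-w, Submodule.neg_mem _ ⟨hdec p _ hw, by simpa [Submodule.mem_comap, ← hdw] using hx2⟩⟩ := by
      ext; simp
    rw [this]
    exact Submodule.neg_mem _ hwB
  -- choose linear sections of ψ p
  have hsec : ∀ p : ℤ, ∃ s : (Z p ⧸ (B p).comap (Z p).subtype) →ₗ[ℂ] K p,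
      ∀ e, ψ p (s e) = e := by
    intro p
    obtain ⟨g, hg⟩ := by
      set_option synthInstance.maxHeartbeats 1000000 in
      exact (ψ p).exists_rightInverse_of_surjective
        (LinearMap.range_eq_top.mpr (ψsurj p))
    exact ⟨g, fun e => LinearMap.congr_fun hg e⟩
  choose s hs using hsec
  -- inclusion of K p into Zker and the quotient map to H
  set ι : ∀ p : ℤ, (K p →ₗ[ℂ] Zker) := fun p => Submodule.inclusion inf_le_right with hι
  set Hmk : Zker →ₗ[ℂ] (Zker ⧸ Bsub.comap Zker.subtype) := (Bsub.comap Zker.subtype).mkQ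
    with hHmk
  set Ψ : (DirectSum ℤ (fun p => (Z p ⧸ (B p).comap (Z p).subtype))) →ₗ[ℂ]
      (Zker ⧸ Bsub.comap Zker.subtype) :=
    DirectSum.toModule ℂ ℤ _ (fun p => (Hmk.comp (ι p)).comp (s p)) with hΨ
  have Ψ_lof : ∀ p e, Ψ (DirectSum.lof ℂ ℤ _ p e) = Hmk (ι p (s p e)) := by
    intro p e
    rw [hΨ, DirectSum.toModule_lof]
    rfl
  -- surjectivity of Ψ
  have key : ∀ k : ℕ, ∀ p : ℤ, N ≤ p + k → ∀ x (hx : x ∈ K p),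
      Hmk ⟨x, hx.2⟩ ∈ LinearMap.range Ψ := by
    intro k
    induction k with
    | zero =>
      intro p hNp x hx
      have hx0 : x = 0 := by
        have hb : F p (b + 1 + 1) = ⊥ := hN p (by simpa using hNp) _
        simpa [hb] using hx.1
      subst hx0
      have : (⟨(0 : M (b + 1 + 1)), hx.2⟩ : Zker) = 0 := rfl
      rw [this, map_zero]
      exact Submodule.zero_mem _
    | succ k ih =>
      intro p hNp x hx
      set e := ψ p ⟨x, hx⟩ with he
      set x' := s p e with hx'
      have h0 : ψ p (⟨x, hx⟩ - x') = 0 := by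
        rw [map_sub, hs p e, he, sub_self]
      have hmem : x - (x' : M (b + 1 + 1)) ∈ B p := by
        rw [ψ_apply] at h0
        have := (Submodule.Quotient.mk_eq_zero _).mp h0
        simpa using this
      obtain ⟨a, haB, c, hcB, hac⟩ := Submodule.mem_sup.mp hmem
      obtain ⟨y, hy, hya⟩ := haB
      have hdx : d (b + 1 + 1) x = 0 := hx.2
      have hdx' : d (b + 1 + 1) (x' : M (b + 1 + 1)) = 0 := x'.2.2
      have hdc : d (b + 1 + 1) c = 0 := by
        have hc : c = (x - x') - a := by rw [← hac]; abel
        rw [hc, map_sub, map_sub, hdx, hdx', ← hya, hdd]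
        abel
      have hcK : c ∈ K (p + 1) := ⟨hcB.1, LinearMap.mem_ker.mpr hdc⟩
      obtain ⟨ξc, hξc⟩ := ih (p + 1) (by push_cast at hNp ⊢; linarith) c hcK
      refine ⟨DirectSum.lof ℂ ℤ _ p e + ξc, ?_⟩
      rw [map_add, Ψ_lof, hξc]
      have hBmem : ((⟨x, hx.2⟩ : Zker) - (ι p x' + ⟨c, hcK.2⟩)) ∈ Bsub.comap Zker.subtype := by
        have hval : (((⟨x, hx.2⟩ : Zker) - (ι p x' + ⟨c, hcK.2⟩) : Zker) : M (b + 1 + 1))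
            = a := by
          simp only [AddSubgroupClass.coe_sub, Submodule.coe_add, hι,
            Submodule.coe_inclusion]
          rw [sub_add_eq_sub_sub, ← hac, add_sub_cancel_right]
        refine Submodule.mem_comap.mpr ?_
        rw [Submodule.subtype_apply, hval]
        exact ⟨y, hya⟩
      have h2 : Hmk ((⟨x, hx.2⟩ : Zker) - (ι p x' + ⟨c, hcK.2⟩)) = 0 :=
        (Submodule.Quotient.mk_eq_zero _).mpr hBmem
      rw [map_sub, map_add] at h2
      have h3 := sub_eq_zero.mp h2
      rw [← h3]
  -- Ψ is surjective
  have Ψsurj : Function.Surjective Ψ := by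
    intro h
    obtain ⟨⟨x, hxker⟩, rfl⟩ := Submodule.mkQ_surjective _ h
    obtain ⟨p, hp⟩ := hexh (b + 1 + 1) x
    have hxK : x ∈ K p := ⟨hp, hxker⟩
    obtain ⟨ξ, hξ⟩ := key (N - p).toNat p
      (by have := Int.self_le_toNat (N - p); linarith) x hxK
    exact ⟨ξ, hξ⟩
  -- Ψ has trivial kernel
  have Ψker : ∀ ξ, Ψ ξ = 0 → ξ = 0 := by
    intro ξ hξ
    by_contra hne
    have hsupp : ξ.support.Nonempty := by
      rw [Finset.nonempty_iff_ne_empty]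
      intro hemp
      exact hne (DFinsupp.support_eq_empty.mp hemp)
    set p₀ := ξ.support.min' hsupp with hp₀
    have hp₀mem : p₀ ∈ ξ.support := ξ.support.min'_mem hsupp
    have hp₀le : ∀ p ∈ ξ.support, p₀ ≤ p := fun p hp => ξ.support.min'_le p hp
    set xZ : Zker := ∑ p ∈ ξ.support, ι p (s p (ξ p)) with hxZ
    have hcoe : (xZ : M (b + 1 + 1)) = ∑ p ∈ ξ.support, ((s p (ξ p) : K p) : M (b + 1 + 1)) := by
      rw [hxZ, AddSubmonoidClass.coe_finset_sum]
      exact Finset.sum_congr rfl fun p _ => rfl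
    have hΨξ : Ψ ξ = Hmk xZ := by
      conv_lhs => rw [← DirectSum.sum_support_of ξ]
      rw [map_sum, hxZ, map_sum]
      refine Finset.sum_congr rfl fun p hp => ?_
      rw [← DirectSum.lof_eq_of ℂ, Ψ_lof]
    have hxB : (xZ : M (b + 1 + 1)) ∈ Bsub := by
      have h0 : Hmk xZ = 0 := by rw [← hΨξ, hξ]
      have := (Submodule.Quotient.mk_eq_zero _).mp h0
      simpa using this
    obtain ⟨u, hu⟩ := hxB
    have hxF : (xZ : M (b + 1 + 1)) ∈ F p₀ (b + 1 + 1) := by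
      rw [hcoe]
      refine Submodule.sum_mem _ fun p hp => ?_
      exact Fmono p₀ p (hp₀le p hp) _ (s p (ξ p)).2.1
    obtain ⟨q, hq⟩ := hexh (b + 1) u
    have hduF : d (b + 1) u ∈ F p₀ (b + 1 + 1) := by rw [hu]; exact hxF
    obtain ⟨u', hu', hdu'⟩ := lemB (p₀ - q).toNat q p₀
      (by have := Int.self_le_toNat (p₀ - q); linarith) u hq hduF
    have hxK : (xZ : M (b + 1 + 1)) ∈ K p₀ := ⟨hxF, xZ.2⟩
    have h1 : ψ p₀ ⟨(xZ : M (b + 1 + 1)), hxK⟩ = 0 := by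
      rw [ψ_apply]
      apply (Submodule.Quotient.mk_eq_zero _).mpr
      show (xZ : M (b + 1 + 1)) ∈ B p₀
      apply Submodule.mem_sup_left
      exact ⟨u', hu', by rw [hdu', hu]⟩
    have h2 : ψ p₀ ⟨(xZ : M (b + 1 + 1)), hxK⟩ - ξ p₀ = 0 := by
      rw [← hs p₀ (ξ p₀), ← map_sub, ψ_apply]
      apply (Submodule.Quotient.mk_eq_zero _).mpr
      show ((⟨(xZ : M (b + 1 + 1)), hxK⟩ - s p₀ (ξ p₀) : K p₀) : M (b + 1 + 1)) ∈ B p₀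
      have hval : ((⟨(xZ : M (b + 1 + 1)), hxK⟩ - s p₀ (ξ p₀) : K p₀) : M (b + 1 + 1))
          = ∑ p ∈ ξ.support.erase p₀, ((s p (ξ p) : K p) : M (b + 1 + 1)) := by
        simp only [AddSubgroupClass.coe_sub]
        rw [hcoe, ← Finset.add_sum_erase _ _ hp₀mem, add_sub_cancel_left]
      rw [hval]
      refine Submodule.sum_mem _ fun p hp => ?_
      apply Submodule.mem_sup_right
      have hpgt : p₀ + 1 ≤ p := by
        have ha := hp₀le p (Finset.mem_of_mem_erase hp)
        have hb := Finset.ne_of_mem_erase hp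
        omega
      refine ⟨Fmono (p₀ + 1) p hpgt _ (s p (ξ p)).2.1,
        Fmono p₀ p (by omega) _ (s p (ξ p)).2.1, ?_⟩
      refine Submodule.mem_comap.mpr ?_
      rw [show d (b + 1 + 1) ((s p (ξ p) : K p) : M (b + 1 + 1)) = 0 from (s p (ξ p)).2.2]
      exact Submodule.zero_mem _
    rw [h1] at h2
    have hzero : ξ p₀ = 0 := by simpa using h2.symm
    exact (DFinsupp.mem_support_iff.mp hp₀mem) hzero
  have Ψinj : Function.Injective Ψ := by
    intro ξ η h
    have h0 : Ψ (ξ - η) = 0 := by rw [map_sub, h, sub_self]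
    exact sub_eq_zero.mp (Ψker _ h0)
  exact ⟨(LinearEquiv.ofBijective Ψ ⟨Ψinj, Ψsurj⟩).symm⟩
end

section
/- For n = 2m+1, the irreducible representation of SO(n) with highest weight (1,1,…,1) (m ones), i.e. Λ^m ℂ^n, contains a nonzero vector invariant under the standardly embedded subgroup SO(n−k+1) if and only if k > m. -/
open ExteriorAlgebra

namespace ExtInvAux

variable {n : ℕ}

/-- The `±1` diagonal entries: `-1` exactly at positions `i` and `j`. -/
def sgn (i j t : Fin n) : ℝ := if t = i ∨ t = j then -1 else 1

/-- Complex version of `sgn`. -/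
def sgnC (i j t : Fin n) : ℂ := if t = i ∨ t = j then -1 else 1

lemma sgn_mem (i j : Fin n) (hij : i ≠ j) :
    Matrix.diagonal (sgn i j) ∈ Matrix.specialOrthogonalGroup (Fin n) ℝ := by
  classical
  rw [Matrix.mem_specialOrthogonalGroup_iff]
  constructor
  · rw [Matrix.mem_orthogonalGroup_iff]
    have : star (Matrix.diagonal (sgn i j)) = Matrix.diagonal (sgn i j) := by
      simp [Matrix.star_eq_conjTranspose, Matrix.diagonal_conjTranspose]
    rw [Matrix.diagonal_transpose, Matrix.diagonal_mul_diagonal]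
    convert Matrix.diagonal_one using 2
    ext t
    simp only [Pi.mul_apply, sgn]
    split <;> norm_num
  · rw [Matrix.det_diagonal]
    have : ∀ t, sgn i j t = if t ∈ ({i, j} : Finset (Fin n)) then (-1:ℝ) else 1 := by
      intro t; simp [sgn]
    simp_rw [this]
    rw [Finset.prod_ite_mem, Finset.univ_inter, Finset.prod_const,
      Finset.card_pair hij]
    norm_num

lemma toLin'_single (i j t : Fin n) :
    Matrix.toLin' ((Matrix.diagonal (sgn i j)).map (Complex.ofReal : ℝ → ℂ))
      (Pi.single t 1 : Fin n → ℂ) = sgnC i j t • (Pi.single t 1 : Fin n → ℂ) := by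
  classical
  rw [Matrix.toLin'_apply, Matrix.diagonal_map (by simp), Matrix.diagonal_mulVec_single]
  ext x
  rcases eq_or_ne x t with rfl | hx
  · simp only [Pi.single_eq_same, Pi.smul_apply, smul_eq_mul, mul_one, sgn, sgnC,
      Function.comp]
    split <;> norm_num
  · simp [Pi.single_eq_of_ne hx]

lemma map_ιMulti_single {m' : ℕ} (i j : Fin n) (s : Fin m' → Fin n) :
    ExteriorAlgebra.map (Matrix.toLin'
        ((Matrix.diagonal (sgn i j)).map (Complex.ofReal : ℝ → ℂ)))
      (ιMulti ℂ m' (fun a => (Pi.single (s a) 1 : Fin n → ℂ))) =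
    (∏ a, sgnC i j (s a)) • ιMulti ℂ m' (fun a => (Pi.single (s a) 1 : Fin n → ℂ)) := by
  rw [map_apply_ιMulti]
  have : (Matrix.toLin' ((Matrix.diagonal (sgn i j)).map (Complex.ofReal : ℝ → ℂ))) ∘
      (fun a => (Pi.single (s a) 1 : Fin n → ℂ)) =
      fun a => sgnC i j (s a) • (Pi.single (s a) 1 : Fin n → ℂ) := by
    funext a; exact toLin'_single i j (s a)
  rw [this]
  exact MultilinearMap.map_smul_univ (ιMulti ℂ m' (M := Fin n → ℂ)).toMultilinearMap _ _

lemma prod_sgnC {m' : ℕ} (i j : Fin n) (s : Fin m' → Fin n) (hs : Function.Injective s)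
    (a0 : Fin m') (ha0 : s a0 = i) (hj : ∀ a, s a ≠ j) :
    (∏ a, sgnC i j (s a)) = -1 := by
  classical
  rw [Finset.prod_eq_single a0]
  · simp [sgnC, ha0]
  · intro b _ hb
    have h1 : s b ≠ i := fun h => hb (hs (h.trans ha0.symm))
    simp [sgnC, h1, hj b]
  · simp

lemma exists_pair (m k : ℕ) (hk : 0 < k) (hkm : k ≤ m) (s : Fin m → Fin (2*m+1))
    (hs : Function.Injective s) :
    ∃ i j : Fin (2*m+1), i ≠ j ∧ k - 1 ≤ (i:ℕ) ∧ k - 1 ≤ (j:ℕ) ∧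
      (∃ a, s a = i) ∧ (∀ a, s a ≠ j) := by
  classical
  set R : Finset (Fin (2*m+1)) := Finset.univ.image s with hRdef
  have hR : R.card = m := by
    rw [hRdef, Finset.card_image_of_injective _ hs, Finset.card_univ, Fintype.card_fin]
  set A : Finset (Fin (2*m+1)) := Finset.univ.filter (fun t => k - 1 ≤ (t:ℕ)) with hAdef
  have hAc : Aᶜ.card ≤ k - 1 := by
    have hsub : Aᶜ ⊆ Finset.univ.image
        (fun t : Fin (k-1) => (Fin.castLE (by omega) t : Fin (2*m+1))) := by
      intro t ht
      simp only [hAdef, Finset.mem_compl, Finset.mem_filter, Finset.mem_univ, true_and,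
        not_le] at ht
      refine Finset.mem_image.2 ⟨⟨(t:ℕ), ht⟩, Finset.mem_univ _, ?_⟩
      ext; simp
    calc Aᶜ.card ≤ _ := Finset.card_le_card hsub
      _ ≤ (Finset.univ : Finset (Fin (k-1))).card := Finset.card_image_le
      _ = k - 1 := by simp
  have hAcard : m < A.card := by
    have h1 : A.card + Aᶜ.card = 2*m+1 := by
      rw [Finset.card_add_card_compl, Fintype.card_fin]
    omega
  have hi : ∃ i, i ∈ R ∧ i ∈ A := by
    by_contra h
    push_neg at h
    have hsub : R ⊆ Aᶜ := fun t ht => Finset.mem_compl.2 (fun hA => h t ht hA)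
    have := Finset.card_le_card hsub
    omega
  obtain ⟨i, hiR, hiA⟩ := hi
  have hj : ∃ j, j ∈ A ∧ j ∉ R := by
    by_contra h
    push_neg at h
    have hsub : A ⊆ R := fun t ht => h t ht
    have := Finset.card_le_card hsub
    omega
  obtain ⟨j, hjA, hjR⟩ := hj
  obtain ⟨a0, _, ha0⟩ := Finset.mem_image.1 hiR
  refine ⟨i, j, fun h => hjR (h ▸ hiR), ?_, ?_, ⟨a0, ha0⟩, fun a ha => hjR ?_⟩
  · simpa [hAdef] using hiA
  · simpa [hAdef] using hjA
  · exact Finset.mem_image.2 ⟨a, Finset.mem_univ _, ha⟩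

lemma list_prod_fix {M : Type*} [AddCommMonoid M] [Module ℂ M]
    (l : List (Module.End ℂ M)) (v : M)
    (h : ∀ f ∈ l, f v = v) : l.prod v = v := by
  induction l with
  | nil => simp
  | cons p t ih =>
      rw [List.prod_cons, Module.End.mul_apply, ih (fun f hf => h f (List.mem_cons_of_mem _ hf)),
        h p List.mem_cons_self]

lemma list_prod_eigen {M : Type*} [AddCommMonoid M] [Module ℂ M] {α : Type*}
    (l : List α) (f : α → Module.End ℂ M) (c : α → ℂ) (e : M)
    (h : ∀ p ∈ l, f p e = c p • e) : (l.map f).prod e = (l.map c).prod • e := by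
  induction l with
  | nil => simp
  | cons p t ih =>
      rw [List.map_cons, List.prod_cons, Module.End.mul_apply,
        ih (fun q hq => h q (List.mem_cons_of_mem _ hq)), map_smul,
        h p List.mem_cons_self, List.map_cons, List.prod_cons, smul_smul, mul_comm]

noncomputable def Fop (n : ℕ) (i j : Fin n) : Module.End ℂ (ExteriorAlgebra ℂ (Fin n → ℂ)) :=
  (ExteriorAlgebra.map (Matrix.toLin'
    ((Matrix.diagonal (sgn i j)).map (Complex.ofReal : ℝ → ℂ)))).toLinearMap

noncomputable def Pop (n : ℕ) (p : Fin n × Fin n) :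
    Module.End ℂ (ExteriorAlgebra ℂ (Fin n → ℂ)) :=
  (2:ℂ)⁻¹ • (1 + Fop n p.1 p.2)

noncomputable def pairsList (n k : ℕ) : List (Fin n × Fin n) :=
  (Finset.univ.filter fun p : Fin n × Fin n =>
    p.1 ≠ p.2 ∧ k - 1 ≤ (p.1:ℕ) ∧ k - 1 ≤ (p.2:ℕ)).toList

lemma hard (m k : ℕ) (hk : 0 < k) (hkm : k ≤ m)
    (v : ExteriorAlgebra ℂ (Fin (2*m+1) → ℂ)) (hv : v ∈ ⋀[ℂ]^m (Fin (2*m+1) → ℂ))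
    (hinv : ∀ i j : Fin (2*m+1), i ≠ j → k-1 ≤ (i:ℕ) → k-1 ≤ (j:ℕ) →
      Fop (2*m+1) i j v = v) :
    v = 0 := by
  classical
  set l := pairsList (2*m+1) k with hl
  set Q : Module.End ℂ (ExteriorAlgebra ℂ (Fin (2*m+1) → ℂ)) :=
    (l.map (Pop (2*m+1))).prod with hQ
  have hQv : Q v = v := by
    apply list_prod_fix
    intro f hf
    rw [List.mem_map] at hf
    obtain ⟨p, hp, rfl⟩ := hf
    rw [hl, pairsList, Finset.mem_toList, Finset.mem_filter] at hp
    obtain ⟨-, hne, h1, h2⟩ := hp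
    show ((2:ℂ)⁻¹ • (1 + Fop (2*m+1) p.1 p.2)) v = v
    rw [LinearMap.smul_apply, LinearMap.add_apply, Module.End.one_apply,
      hinv _ _ hne h1 h2, ← two_smul ℂ v, smul_smul]
    norm_num
  have hPe : ∀ (s : Fin m → Fin (2*m+1)), ∀ p ∈ l,
      Pop (2*m+1) p (ιMulti ℂ m (fun a => (Pi.single (s a) 1 : Fin (2*m+1) → ℂ))) =
      ((2:ℂ)⁻¹ * (1 + ∏ a, sgnC p.1 p.2 (s a))) •
        ιMulti ℂ m (fun a => (Pi.single (s a) 1 : Fin (2*m+1) → ℂ)) := by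
    intro s p _
    show ((2:ℂ)⁻¹ • (1 + Fop (2*m+1) p.1 p.2)) _ = _
    rw [LinearMap.smul_apply, LinearMap.add_apply, Module.End.one_apply]
    rw [show Fop (2*m+1) p.1 p.2 (ιMulti ℂ m (fun a => (Pi.single (s a) 1 : Fin (2*m+1) → ℂ)))
        = (∏ a, sgnC p.1 p.2 (s a)) •
          ιMulti ℂ m (fun a => (Pi.single (s a) 1 : Fin (2*m+1) → ℂ)) from
      map_ιMulti_single p.1 p.2 s]
    rw [smul_add, smul_smul, mul_add, mul_one, ← add_smul]
  have hQz : ∀ s : Fin m → Fin (2*m+1), Function.Injective s →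
      Q (ιMulti ℂ m (fun a => (Pi.single (s a) 1 : Fin (2*m+1) → ℂ))) = 0 := by
    intro s hs
    obtain ⟨i, j, hij, hi, hj, ⟨a0, ha0⟩, hjnot⟩ := exists_pair m k hk hkm s hs
    rw [hQ, list_prod_eigen l (Pop (2*m+1))
      (fun p => (2:ℂ)⁻¹ * (1 + ∏ a, sgnC p.1 p.2 (s a))) _ (hPe s)]
    have hmem : ((i, j) : Fin (2*m+1) × Fin (2*m+1)) ∈ l := by
      rw [hl, pairsList, Finset.mem_toList, Finset.mem_filter]
      exact ⟨Finset.mem_univ _, hij, hi, hj⟩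
    have hc : (2:ℂ)⁻¹ * (1 + ∏ a, sgnC i j (s a)) = 0 := by
      rw [prod_sgnC i j s hs a0 ha0 hjnot]; ring
    rw [List.prod_eq_zero (List.mem_map.2 ⟨(i, j), hmem, hc⟩), zero_smul]
  have h0 : Q.compAlternatingMap (ιMulti ℂ m (M := Fin (2*m+1) → ℂ)) = 0 := by
    apply Module.Basis.ext_alternating (Pi.basisFun ℂ (Fin (2*m+1)))
    intro s hs
    simp only [LinearMap.compAlternatingMap_apply, AlternatingMap.zero_apply]
    have := hQz s hs
    simpa [Pi.basisFun_apply] using this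
  have hQzero : Q v = 0 := by
    have hv' : v ∈ Submodule.span ℂ (Set.range (ιMulti ℂ m (M := Fin (2*m+1) → ℂ))) := by
      rw [ιMulti_span_fixedDegree]; exact hv
    refine Submodule.span_induction ?_ ?_ ?_ ?_ hv'
    · rintro x ⟨f, rfl⟩
      simpa using DFunLike.congr_fun h0 f
    · exact map_zero Q
    · intro x y _ _ hx hy; rw [map_add, hx, hy, add_zero]
    · intro c x _ hx; rw [map_smul, hx, smul_zero]
  rw [← hQv, hQzero]

noncomputable def detA (m n : ℕ) (h : m ≤ n) : (Fin n → ℂ) [⋀^Fin m]→ₗ[ℂ] ℂ :=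
  (Matrix.detRowAlternating).compLinearMap (LinearMap.funLeft ℂ ℂ (Fin.castLE h))

lemma detA_apply_single (m n : ℕ) (h : m ≤ n) :
    detA m n h (fun a => (Pi.single (Fin.castLE h a) 1 : Fin n → ℂ)) = 1 := by
  classical
  have key : Matrix.of (fun a : Fin m =>
      ((Pi.single (Fin.castLE h a) 1 : Fin n → ℂ)) ∘ (Fin.castLE h)) =
      (1 : Matrix (Fin m) (Fin m) ℂ) := by
    ext a b
    rcases eq_or_ne b a with rfl | hb
    · simp [Matrix.one_apply]
    · have hne : Fin.castLE h b ≠ Fin.castLE h a := by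
        simp only [ne_eq, Fin.ext_iff, Fin.coe_castLE]
        simpa [Fin.ext_iff] using hb
      simp [Matrix.one_apply, Pi.single_eq_of_ne hne, hb, hb.symm]
  have : detA m n h (fun a => (Pi.single (Fin.castLE h a) 1 : Fin n → ℂ)) =
      (Matrix.of (fun a : Fin m =>
      ((Pi.single (Fin.castLE h a) 1 : Fin n → ℂ)) ∘ (Fin.castLE h))).det := rfl
  rw [this, key, Matrix.det_one]

noncomputable def witness (m n : ℕ) (h : m ≤ n) : ExteriorAlgebra ℂ (Fin n → ℂ) :=
  ιMulti ℂ m (fun a => (Pi.single (Fin.castLE h a) 1 : Fin n → ℂ))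

lemma witness_ne_zero (m n : ℕ) (h : m ≤ n) : witness m n h ≠ 0 := by
  classical
  intro h0
  have := liftAlternating_apply_ιMulti (R := ℂ) (M := Fin n → ℂ) (N := ℂ)
    (Function.update (fun i => 0) m (detA m n h))
    (fun a => (Pi.single (Fin.castLE h a) 1 : Fin n → ℂ))
  rw [show ιMulti ℂ m _ = witness m n h from rfl, h0, map_zero] at this
  rw [Function.update_self, detA_apply_single] at this
  exact one_ne_zero this.symm

end ExtInvAux



/-- **Invariants of `SO(n−k+1)` in `Λ^m ℂ^n`, `n = 2m+1`.**
For `n = 2m+1`, consider `Λ^m ℂ^n`, the irreducible representation of `SO(n)` with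
highest weight `(1,…,1)` (`m` ones), where `g ∈ SO(n)` acts on the exterior power
through (the complexification of) its standard action on `ℂⁿ`.  Let
`SO(n−k+1) ⊆ SO(n)` be the standardly embedded subgroup fixing the first `k−1`
standard basis vectors.  Then `Λ^m ℂ^n` contains a nonzero `SO(n−k+1)`-invariant
vector if and only if `k > m`. -/
theorem exterior_power_invariants_iff (m k : ℕ) (hm : 0 < m) (hk : 0 < k) :
    (∃ v : ExteriorAlgebra ℂ (Fin (2 * m + 1) → ℂ),
      v ∈ ⋀[ℂ]^m (Fin (2 * m + 1) → ℂ) ∧ v ≠ 0 ∧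
      ∀ g : Matrix.specialOrthogonalGroup (Fin (2 * m + 1)) ℝ,
        (∀ i : Fin (2 * m + 1), (i : ℕ) < k - 1 →
          Matrix.mulVec (g : Matrix (Fin (2 * m + 1)) (Fin (2 * m + 1)) ℝ) (Pi.single i 1)
            = Pi.single i 1) →
        ExteriorAlgebra.map
          (Matrix.toLin'
            (((g : Matrix (Fin (2 * m + 1)) (Fin (2 * m + 1)) ℝ)).map
              (Complex.ofReal : ℝ → ℂ))) v = v)
    ↔ m < k := by
  classical
  constructor
  · rintro ⟨v, hv, hv0, hinvg⟩
    by_contra hlt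
    push_neg at hlt  -- k ≤ m
    refine hv0 (ExtInvAux.hard m k hk hlt v hv ?_)
    intro i j hij hi hj
    have hfix : ∀ t : Fin (2*m+1), (t:ℕ) < k - 1 →
        Matrix.mulVec (Matrix.diagonal (ExtInvAux.sgn i j)) (Pi.single t 1) = Pi.single t 1 := by
      intro t ht
      rw [Matrix.diagonal_mulVec_single]
      have hti : t ≠ i := by
        intro h; subst h; omega
      have htj : t ≠ j := by
        intro h; subst h; omega
      rw [show ExtInvAux.sgn i j t = 1 by simp [ExtInvAux.sgn, hti, htj], one_mul]
    exact hinvg ⟨Matrix.diagonal (ExtInvAux.sgn i j), ExtInvAux.sgn_mem i j hij⟩ hfix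
  · intro hmk
    have hle : m ≤ 2 * m + 1 := by omega
    refine ⟨ExtInvAux.witness m (2*m+1) hle,
      ιMulti_range ℂ m (Set.mem_range_self _), ExtInvAux.witness_ne_zero m (2*m+1) hle, ?_⟩
    intro g hg
    rw [ExtInvAux.witness, map_apply_ιMulti]
    congr 1
    funext a
    have ha : ((Fin.castLE hle a : Fin (2*m+1)) : ℕ) < k - 1 := by
      simp only [Fin.coe_castLE]
      omega
    have hfix := hg (Fin.castLE hle a) ha
    simp only [Function.comp_apply]
    funext x
    have hx := congrFun hfix x
    simp only [Matrix.mulVec_single_one, Matrix.col_apply] at hx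
    simp only [Matrix.toLin'_apply, Matrix.mulVec_single_one, Matrix.col_apply, Matrix.map_apply]
    rw [hx]
    rcases eq_or_ne x (Fin.castLE hle a) with rfl | hxt
    · simp
    · simp [Pi.single_eq_of_ne hxt]
end
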